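/- arXiv:1702.00765 — 7 statements merged into one kernel-verified Lean document; each statement's English description precedes it below -/
import Mathlib

section
/- Let A ∈ Alg Lat ℳ(λ) and let 𝒫 = (V_𝒫, E_𝒫) be a path of 𝒯 with r₂^𝒫(S_λ) > 0. Then there exists a unique function φ̂_𝒫 : ℕ₀ → ℂ such that the restriction of A* to ℓ²(V_𝒫) equals (M^{λ_𝒫}_{φ̂_𝒫})*, the adjoint of the multiplication operator on ℓ²(V_𝒫) with symbol φ̂_𝒫 relative to the path 𝒫 with weights λ_𝒫 = {λ_v}_{v ∈ V_𝒫∖{root}}. -/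
open Filter Finset Classical

set_option linter.unusedVariables false
open scoped ComplexConjugate ENNReal

noncomputable section
attribute [local instance] Classical.propDecidable

/-- A countably infinite rooted directed tree, encoded by the parent function
(with the convention `par root = root`) and the depth function `|·|`. -/
structure DirTree (V : Type*) where
  root : V
  par : V → V
  depth : V → ℕ
  par_root : par root = root
  depth_eq_zero : ∀ v, depth v = 0 ↔ v = root
  depth_par : ∀ v, v ≠ root → depth (par v) + 1 = depth v

variable {V : Type*}

/-- The tree is leafless: every vertex has a child. -/
def DirTree.Leafless (T : DirTree V) : Prop :=
  ∀ u : V, ∃ v : V, v ≠ T.root ∧ T.par v = u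

/-- `wProd T lam v k = λ_{par^k(v)|v}`, the product of the weights along `k` steps up from `v`. -/
def wProd (T : DirTree V) (lam : V → ℂ) (v : V) (k : ℕ) : ℂ :=
  ∏ n ∈ Finset.range k, lam (T.par^[n] v)

/-- `(Γ_φ f)(v) = ∑_{k=0}^{|v|} λ_{par^k(v)|v} φ(k) f(par^k(v))`. -/
def Gamma (T : DirTree V) (lam : V → ℂ) (φ : ℕ → ℂ) (f : V → ℂ) (v : V) : ℂ :=
  ∑ k ∈ Finset.range (T.depth v + 1), wProd T lam v k * φ k * f (T.par^[k] v)

/-- `S` is the weighted shift `S_λ` on `ℓ²(V)`. -/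
def IsShift (T : DirTree V) (lam : V → ℝ)
    (S : lp (fun _ : V => ℂ) 2 →L[ℂ] lp (fun _ : V => ℂ) 2) : Prop :=
  ∀ f : lp (fun _ : V => ℂ) 2, ∀ v : V,
    S f v = if v = T.root then 0 else (lam v : ℂ) * f (T.par v)

/-- `M` is the (bounded, everywhere defined) multiplication operator `M_φ` with symbol `φ`;
the existence of such an `M` is equivalent to `φ ∈ 𝓜(λ)`. -/
def IsMultOp (T : DirTree V) (lam : V → ℝ) (φ : ℕ → ℂ)
    (M : lp (fun _ : V => ℂ) 2 →L[ℂ] lp (fun _ : V => ℂ) 2) : Prop :=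
  ∀ f : lp (fun _ : V => ℂ) 2, ∀ v : V,
    M f v = Gamma T (fun u => (lam u : ℂ)) φ (⇑f) v


/-- `P` is (the vertex set of) a path in the tree: a subtree containing the root in which
every vertex has exactly one child. -/
def DirTree.IsPath (T : DirTree V) (P : Set V) : Prop :=
  T.root ∈ P ∧ (∀ v ∈ P, v ≠ T.root → T.par v ∈ P) ∧
    ∀ v ∈ P, ∃! u : V, u ∈ P ∧ u ≠ T.root ∧ T.par u = v

namespace Stmt10

section Path

variable (T : DirTree V) (P : Set V)

def nxt (v : V) : V :=
  if h : ∃ u : V, u ∈ P ∧ u ≠ T.root ∧ T.par u = v then h.choose else v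

def pth : ℕ → V
  | 0 => T.root
  | n + 1 => nxt T P (pth n)

variable {T P}

lemma nxt_spec (hP : T.IsPath P) {v : V} (hv : v ∈ P) :
    nxt T P v ∈ P ∧ nxt T P v ≠ T.root ∧ T.par (nxt T P v) = v := by
  obtain ⟨u, hu, -⟩ := hP.2.2 v hv
  have h : ∃ u : V, u ∈ P ∧ u ≠ T.root ∧ T.par u = v := ⟨u, hu⟩
  rw [nxt, dif_pos h]
  exact h.choose_spec

lemma pth_mem (hP : T.IsPath P) : ∀ n, pth T P n ∈ P
  | 0 => hP.1
  | n + 1 => (nxt_spec hP (pth_mem hP n)).1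

lemma pth_ne_root (hP : T.IsPath P) {n : ℕ} (hn : n ≠ 0) : pth T P n ≠ T.root := by
  cases n with
  | zero => exact absurd rfl hn
  | succ m => exact (nxt_spec hP (pth_mem hP m)).2.1

lemma par_pth_succ (hP : T.IsPath P) (n : ℕ) : T.par (pth T P (n + 1)) = pth T P n :=
  (nxt_spec hP (pth_mem hP n)).2.2

lemma depth_pth (hP : T.IsPath P) : ∀ n, T.depth (pth T P n) = n
  | 0 => (T.depth_eq_zero _).2 rfl
  | n + 1 => by
    have h1 := T.depth_par (pth T P (n + 1)) (pth_ne_root hP (Nat.succ_ne_zero n))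
    rw [par_pth_succ hP, depth_pth hP n] at h1
    omega

lemma pth_inj (hP : T.IsPath P) : Function.Injective (pth T P) := by
  intro a b h
  have ha := depth_pth hP a
  rw [h, depth_pth hP b] at ha
  omega

lemma eq_pth_of_depth (hP : T.IsPath P) :
    ∀ n, ∀ v, v ∈ P → T.depth v = n → v = pth T P n := by
  intro n
  induction n with
  | zero => intro v hv h0; rw [(T.depth_eq_zero v).1 h0]; rfl
  | succ n ih =>
    intro v hv hd
    have hvr : v ≠ T.root := by
      intro h
      rw [h, (T.depth_eq_zero T.root).2 rfl] at hd
      omega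
    have hpar : T.par v ∈ P := hP.2.1 v hv hvr
    have hdp : T.depth (T.par v) = n := by have := T.depth_par v hvr; omega
    have hIH := ih (T.par v) hpar hdp
    obtain ⟨u, hu, huniq⟩ := hP.2.2 (pth T P n) (pth_mem hP n)
    have h1 : v = u := huniq v ⟨hv, hvr, hIH.symm ▸ rfl⟩
    have h2 : pth T P (n + 1) = u :=
      huniq _ ⟨pth_mem hP (n + 1), pth_ne_root hP (Nat.succ_ne_zero n), par_pth_succ hP n⟩
    rw [h1, h2]

lemma mem_P_eq_pth (hP : T.IsPath P) {v : V} (hv : v ∈ P) : v = pth T P (T.depth v) :=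
  eq_pth_of_depth hP _ v hv rfl

lemma par_iter_pth (hP : T.IsPath P) : ∀ k n, k ≤ n → T.par^[k] (pth T P n) = pth T P (n - k) := by
  intro k
  induction k with
  | zero => intro n _; simp
  | succ k ih =>
    intro n hk
    obtain ⟨m, rfl⟩ : ∃ m, n = m + 1 := ⟨n - 1, by omega⟩
    rw [Function.iterate_succ_apply, par_pth_succ hP, ih m (by omega)]
    congr 1
    omega

end Path

section Weights

variable (T : DirTree V) (P : Set V) (lam : V → ℝ)

def wR : ℕ → ℝ := fun n => ∏ i ∈ Finset.range n, lam (pth T P (i + 1))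

variable {T P lam}

lemma wR_zero : wR T P lam 0 = 1 := by simp [wR]

lemma wR_pos (hP : T.IsPath P) (hlam : ∀ v, v ≠ T.root → 0 < lam v) (n : ℕ) :
    0 < wR T P lam n :=
  Finset.prod_pos fun i _ => hlam _ (pth_ne_root hP (Nat.succ_ne_zero i))

lemma wR_split (m k : ℕ) :
    wR T P lam (m + k) = wR T P lam m * ∏ j ∈ Finset.range k, lam (pth T P (m + j + 1)) := by
  rw [wR, wR, Finset.prod_range_add]

lemma prod_par (hP : T.IsPath P) (m k : ℕ) :
    (∏ i ∈ Finset.range k, lam (T.par^[i] (pth T P (m + k)))) * wR T P lam m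
      = wR T P lam (m + k) := by
  have h1 : ∀ i ∈ Finset.range k, lam (T.par^[i] (pth T P (m + k)))
      = lam (pth T P (m + k - i)) := by
    intro i hi
    rw [par_iter_pth hP i (m + k) (by have := Finset.mem_range.1 hi; omega)]
  rw [Finset.prod_congr rfl h1]
  have h2 : ∀ j ∈ Finset.range k, lam (pth T P (m + k - j))
      = (fun j => lam (pth T P (m + j + 1))) (k - 1 - j) := by
    intro j hj
    have hj' := Finset.mem_range.1 hj
    simp only []
    congr 2
    omega
  rw [Finset.prod_congr rfl h2, Finset.prod_range_reflect (fun j => lam (pth T P (m + j + 1))) k,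
    wR_split m k, mul_comm]

lemma prod_par_full (hP : T.IsPath P) (n : ℕ) :
    (∏ i ∈ Finset.range n, lam (T.par^[i] (pth T P n))) = wR T P lam n := by
  have := prod_par (lam := lam) hP 0 n
  simpa [wR_zero] using this

lemma wProd_pth (hP : T.IsPath P) {k n : ℕ} (hk : k ≤ n) :
    wProd T (fun u => (lam u : ℂ)) (pth T P n) k
      = (((∏ i ∈ Finset.range k, lam (T.par^[i] (pth T P n))) : ℝ) : ℂ) := by
  rw [wProd]
  push_cast
  rfl

lemma wProd_pth_eq (hP : T.IsPath P) {k n : ℕ} (hk : k ≤ n) :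
    wProd T (fun u => (lam u : ℂ)) (pth T P n) k * (wR T P lam (n - k) : ℂ)
      = (wR T P lam n : ℂ) := by
  rw [wProd_pth hP hk]
  have := prod_par (lam := lam) hP (n - k) k
  rw [show n - k + k = n from by omega] at this
  rw [← this]
  push_cast
  ring

end Weights

section Growth

variable {T : DirTree V} {P : Set V} {lam : V → ℝ}

lemma growth_const (hP : T.IsPath P) (hlam : ∀ v, v ≠ T.root → 0 < lam v)
    {c : ℝ} (hc : 0 < c) {N : ℕ}
    (hN : ∀ v ∈ P, N ≤ T.depth v →
      c ≤ (∏ n ∈ Finset.range (T.depth v), lam (T.par^[n] v)) ^ ((T.depth v : ℝ)⁻¹)) :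
    ∃ C : ℝ, 1 ≤ C ∧ ∀ n, c ^ n ≤ C * wR T P lam n := by
  have key1 : ∀ n, N ≤ n → c ^ n ≤ wR T P lam n := by
    intro n hn
    rcases Nat.eq_zero_or_pos n with h0 | hpos
    · subst h0; simp [wR_zero]
    · have hv := hN (pth T P n) (pth_mem hP n) (by rw [depth_pth hP n]; exact hn)
      rw [depth_pth hP n, prod_par_full hP n] at hv
      calc c ^ n ≤ ((wR T P lam n) ^ ((n : ℝ)⁻¹)) ^ n := pow_le_pow_left₀ hc.le hv n
        _ = wR T P lam n := Real.rpow_inv_natCast_pow (wR_pos hP hlam n).le hpos.ne'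
  refine ⟨1 + ∑ j ∈ Finset.range N, c ^ j / wR T P lam j, ?_, ?_⟩
  · have h : 0 ≤ ∑ j ∈ Finset.range N, c ^ j / wR T P lam j :=
      Finset.sum_nonneg fun j _ => div_nonneg (pow_nonneg hc.le j) (wR_pos hP hlam j).le
    linarith
  · intro n
    rcases lt_or_ge n N with h | h
    · have h1 : c ^ n / wR T P lam n ≤ ∑ j ∈ Finset.range N, c ^ j / wR T P lam j :=
        Finset.single_le_sum
          (fun j _ => div_nonneg (pow_nonneg hc.le j) (wR_pos hP hlam j).le)
          (Finset.mem_range.2 h)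
      have h2 : c ^ n = (c ^ n / wR T P lam n) * wR T P lam n := by
        field_simp [(wR_pos hP hlam n).ne']
      rw [h2]
      nlinarith [wR_pos hP hlam n, pow_nonneg hc.le n]
    · calc c ^ n ≤ wR T P lam n := key1 n h
        _ ≤ (1 + ∑ j ∈ Finset.range N, c ^ j / wR T P lam j) * wR T P lam n := by
            have h3 : 0 ≤ ∑ j ∈ Finset.range N, c ^ j / wR T P lam j :=
              Finset.sum_nonneg fun j _ => div_nonneg (pow_nonneg hc.le j) (wR_pos hP hlam j).le
            nlinarith [wR_pos hP hlam n]

lemma growth_bound (hP : T.IsPath P) (hlam : ∀ v, v ≠ T.root → 0 < lam v)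
    {c C : ℝ} (hc : 0 < c) (hC : 1 ≤ C) (hkey : ∀ n, c ^ n ≤ C * wR T P lam n)
    (n : ℕ) {t : ℝ} (ht : 0 ≤ t) :
    t ^ n / wR T P lam n ≤ C * (t / c) ^ n := by
  rw [div_pow, mul_div_assoc', div_le_div_iff₀ (wR_pos hP hlam n) (pow_pos hc n)]
  calc t ^ n * c ^ n ≤ t ^ n * (C * wR T P lam n) :=
        mul_le_mul_of_nonneg_left (hkey n) (pow_nonneg ht n)
    _ = C * t ^ n * wR T P lam n := by ring

end Growth

section Hilbert

local notation "𝓗" => lp (fun _ : V => ℂ) 2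

local notation "⟪" x ", " y "⟫" => @inner ℂ _ _ x y

def ee (v : V) : lp (fun _ : V => ℂ) 2 := lp.single 2 v 1

lemma ee_apply_self (v : V) : ee (v := v) v = 1 := lp.single_apply_self 2 v 1

lemma ee_apply_ne {v w : V} (h : w ≠ v) : ee (v := v) w = 0 := lp.single_apply_ne 2 v 1 h

lemma inner_ee_left (v : V) (x : 𝓗) : ⟪ee v, x⟫ = x v := by
  rw [ee, lp.inner_single_left]
  simp [RCLike.inner_apply]

lemma inner_ee_right (v : V) (x : 𝓗) : ⟪x, ee v⟫ = (starRingEnd ℂ) (x v) := by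
  rw [ee, lp.inner_single_right]
  simp [RCLike.inner_apply]

lemma norm_ee (v : V) : ‖ee (v := v)‖ = 1 := by
  have := lp.norm_single (p := 2) (E := fun _ : V => ℂ) (by norm_num) v (1 : ℂ)
  simpa [ee] using this

lemma coord_le_norm (x : 𝓗) (v : V) : ‖x v‖ ≤ ‖x‖ :=
  lp.norm_apply_le_norm two_ne_zero x v

lemma continuous_eval (v : V) : Continuous fun x : 𝓗 => x v := by
  have h : LipschitzWith 1 fun x : 𝓗 => x v := by
    apply LipschitzWith.of_dist_le_mul
    intro x y
    simp only [NNReal.coe_one, one_mul, dist_eq_norm]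
    have := lp.norm_apply_le_norm (E := fun _ : V => ℂ) two_ne_zero (x - y) v
    rwa [lp.coeFn_sub, Pi.sub_apply] at this
  exact h.continuous

lemma inner_eq_tsum' (x y : 𝓗) :
    ⟪x, y⟫ = ∑' v : V, (starRingEnd ℂ) (x v) * y v := by
  rw [lp.inner_eq_tsum]
  exact tsum_congr fun v => by rw [RCLike.inner_apply, mul_comm]

variable (P) in
lemma memℓp_indicator (x : 𝓗) : Memℓp (Set.indicator P ⇑x) 2 := by
  apply memℓp_gen
  have hsum := (lp.memℓp x).summable (p := 2) (by norm_num)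
  apply Summable.of_nonneg_of_le (fun v => Real.rpow_nonneg (norm_nonneg _) _) _ hsum
  intro v
  apply Real.rpow_le_rpow (norm_nonneg _) _ ENNReal.toReal_nonneg
  by_cases hv : v ∈ P
  · rw [Set.indicator_of_mem hv]
  · rw [Set.indicator_of_notMem hv]; simp

variable (P) in
def Qop : lp (fun _ : V => ℂ) 2 →L[ℂ] lp (fun _ : V => ℂ) 2 :=
  LinearMap.mkContinuous
    { toFun := fun x => (⟨Set.indicator P ⇑x, memℓp_indicator P x⟩ : 𝓗)
      map_add' := fun x y => by
        apply lp.ext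
        funext v
        show Set.indicator P (⇑(x + y)) v = Set.indicator P ⇑x v + Set.indicator P ⇑y v
        by_cases hv : v ∈ P <;>
          simp [Set.indicator, hv, lp.coeFn_add, Pi.add_apply]
      map_smul' := fun c x => by
        apply lp.ext
        funext v
        by_cases hv : v ∈ P <;>
          simp [Set.indicator, hv, lp.coeFn_smul] }
    1
    (by
      intro x
      rw [one_mul]
      apply lp.norm_le_of_tsum_le (by norm_num : (0:ℝ) < (2:ℝ≥0∞).toReal) (norm_nonneg x)
      refine le_trans (Summable.tsum_le_tsum ?_ ((memℓp_indicator P x).summable (by norm_num))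
        ((lp.memℓp x).summable (by norm_num)))
        (le_of_eq (lp.norm_rpow_eq_tsum (by norm_num : (0:ℝ) < (2:ℝ≥0∞).toReal) x).symm)
      intro v
      show ‖Set.indicator P (⇑x) v‖ ^ (2:ℝ≥0∞).toReal ≤ ‖x v‖ ^ (2:ℝ≥0∞).toReal
      apply Real.rpow_le_rpow (norm_nonneg _) _ ENNReal.toReal_nonneg
      by_cases hv : v ∈ P
      · rw [Set.indicator_of_mem hv]
      · rw [Set.indicator_of_notMem hv]; simp)

lemma Qop_apply (x : 𝓗) (v : V) : Qop P x v = Set.indicator P (⇑x) v := rfl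

lemma Qop_adjoint : ContinuousLinearMap.adjoint (Qop (V := V) P) = Qop P := by
  symm
  rw [ContinuousLinearMap.eq_adjoint_iff]
  intro x y
  rw [inner_eq_tsum', inner_eq_tsum']
  apply tsum_congr
  intro v
  rw [Qop_apply, Qop_apply]
  by_cases hv : v ∈ P
  · rw [Set.indicator_of_mem hv, Set.indicator_of_mem hv]
  · rw [Set.indicator_of_notMem hv, Set.indicator_of_notMem hv]
    simp

end Hilbert

section Kz

variable {T : DirTree V} {P : Set V} {lam : V → ℝ}

local notation "𝓗" => lp (fun _ : V => ℂ) 2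
local notation "⟪" x ", " y "⟫" => @inner ℂ _ _ x y

variable (T P lam) in
def kfun (z : ℂ) : V → ℂ := fun v =>
  if v ∈ P then ((starRingEnd ℂ) z) ^ (T.depth v) / ((wR T P lam (T.depth v) : ℝ) : ℂ) else 0

lemma kfun_pth (hP : T.IsPath P) (z : ℂ) (n : ℕ) :
    kfun T P lam z (pth T P n) = ((starRingEnd ℂ) z) ^ n / ((wR T P lam n : ℝ) : ℂ) := by
  rw [kfun, if_pos (pth_mem hP n), depth_pth hP n]

lemma conj_kfun_pth (hP : T.IsPath P) (z : ℂ) (n : ℕ) :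
    (starRingEnd ℂ) (kfun T P lam z (pth T P n)) = z ^ n / ((wR T P lam n : ℝ) : ℂ) := by
  rw [kfun_pth hP, map_div₀, map_pow, Complex.conj_conj, Complex.conj_ofReal]

lemma norm_kfun_pth (hP : T.IsPath P) (hlam : ∀ v, v ≠ T.root → 0 < lam v) (z : ℂ) (n : ℕ) :
    ‖kfun T P lam z (pth T P n)‖ = ‖z‖ ^ n / wR T P lam n := by
  rw [kfun_pth hP, norm_div, norm_pow, RCLike.norm_conj, Complex.norm_real,
    Real.norm_of_nonneg (wR_pos hP hlam n).le]

lemma prod_par_cast (hP : T.IsPath P) {k n : ℕ} (hk : k ≤ n) :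
    (((∏ i ∈ Finset.range k, lam (T.par^[i] (pth T P n))) : ℝ) : ℂ)
      * ((wR T P lam (n - k) : ℝ) : ℂ) = ((wR T P lam n : ℝ) : ℂ) := by
  have h1 : ∀ i ∈ Finset.range k, lam (T.par^[i] (pth T P n))
      = lam (T.par^[i] (pth T P (n - k + k))) := by
    intro i hi
    rw [show n - k + k = n from by omega]
  have := prod_par (lam := lam) hP (n - k) k
  rw [show n - k + k = n from by omega] at this
  rw [← this]
  push_cast
  ring

lemma summable_geom_pow {c t : ℝ} (hc : 0 < c) (ht : 0 ≤ t) (htc : t < c) (K : ℝ) :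
    Summable fun n : ℕ => K * (t / c) ^ n :=
  (summable_geometric_of_lt_one (div_nonneg ht hc.le) ((div_lt_one hc).2 htc)).mul_left K

lemma kfun_memℓp (hP : T.IsPath P) (hlam : ∀ v, v ≠ T.root → 0 < lam v)
    {c C : ℝ} (hc : 0 < c) (hC : 1 ≤ C) (hkey : ∀ n, c ^ n ≤ C * wR T P lam n)
    {z : ℂ} (hz : ‖z‖ < c) : Memℓp (kfun T P lam z) 2 := by
  apply memℓp_gen
  have hvan : ∀ v ∉ Set.range (pth T P),
      (fun v => ‖kfun T P lam z v‖ ^ (2 : ℝ≥0∞).toReal) v = 0 := by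
    intro v hv
    have hvP : v ∉ P := fun hm => hv ⟨T.depth v, (mem_P_eq_pth hP hm).symm⟩
    simp only [kfun, if_neg hvP, norm_zero]
    rw [Real.zero_rpow (by norm_num)]
  rw [← Function.Injective.summable_iff (pth_inj hP) hvan]
  have h2 : ∀ x : ℝ, x ^ (2 : ℝ≥0∞).toReal = x ^ (2 : ℕ) := by
    intro x
    rw [show (2 : ℝ≥0∞).toReal = ((2 : ℕ) : ℝ) from by norm_num, Real.rpow_natCast]
  have hr1 : (0:ℝ) ≤ (‖z‖ / c) ^ 2 := by positivity
  have hr2 : (‖z‖ / c) ^ 2 < 1 :=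
    pow_lt_one₀ (div_nonneg (norm_nonneg z) hc.le) ((div_lt_one hc).2 hz) (by norm_num)
  apply Summable.of_nonneg_of_le
    (fun n => Real.rpow_nonneg (norm_nonneg _) _)
    (fun n => ?_)
    ((summable_geometric_of_lt_one hr1 hr2).mul_left (C ^ 2))
  show ‖kfun T P lam z (pth T P n)‖ ^ (2 : ℝ≥0∞).toReal ≤ C ^ 2 * ((‖z‖ / c) ^ 2) ^ n
  rw [h2, norm_kfun_pth hP hlam z n]
  have h3 : ‖z‖ ^ n / wR T P lam n ≤ C * (‖z‖ / c) ^ n :=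
    growth_bound hP hlam hc hC hkey n (norm_nonneg z)
  calc (‖z‖ ^ n / wR T P lam n) ^ 2 ≤ (C * (‖z‖ / c) ^ n) ^ 2 := by
        have h4 : 0 ≤ ‖z‖ ^ n / wR T P lam n := by
          have := (wR_pos hP hlam n).le
          positivity
        nlinarith
    _ = C ^ 2 * ((‖z‖ / c) ^ 2) ^ n := by
        rw [mul_pow, ← pow_mul, ← pow_mul, Nat.mul_comm]

variable (T P lam) in
def kz (z : ℂ) (h : Memℓp (kfun T P lam z) 2) : lp (fun _ : V => ℂ) 2 :=
  ⟨kfun T P lam z, h⟩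

lemma kz_apply (z : ℂ) (h : Memℓp (kfun T P lam z) 2) (v : V) :
    kz T P lam z h v = kfun T P lam z v := rfl

lemma inner_kz (hP : T.IsPath P) (z : ℂ) (h : Memℓp (kfun T P lam z) 2) (x : 𝓗) :
    ⟪kz T P lam z h, x⟫
      = ∑' n : ℕ, z ^ n / ((wR T P lam n : ℝ) : ℂ) * x (pth T P n) := by
  rw [inner_eq_tsum']
  have hsupp : Function.support (fun v => (starRingEnd ℂ) (kz T P lam z h v) * x v)
      ⊆ Set.range (pth T P) := by
    apply Function.support_subset_iff'.2
    intro v hv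
    have hvP : v ∉ P := fun hm => hv ⟨T.depth v, (mem_P_eq_pth hP hm).symm⟩
    simp [kz_apply, kfun, hvP]
  rw [← Function.Injective.tsum_eq (pth_inj hP) hsupp]
  exact tsum_congr fun n => by rw [kz_apply, conj_kfun_pth hP z n]

lemma inner_kz_ee (hP : T.IsPath P) (z : ℂ) (h : Memℓp (kfun T P lam z) 2) (m : ℕ) :
    ⟪kz T P lam z h, ee (pth T P m)⟫ = z ^ m / ((wR T P lam m : ℝ) : ℂ) := by
  rw [ee, lp.inner_single_right, RCLike.inner_apply, kz_apply, conj_kfun_pth hP z m, one_mul]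

lemma inner_kz_root (hP : T.IsPath P) (z : ℂ) (h : Memℓp (kfun T P lam z) 2) :
    ⟪kz T P lam z h, ee T.root⟫ = 1 := by
  have := inner_kz_ee hP z h 0
  simp only [pow_zero, wR_zero] at this
  simpa [pth] using this

end Kz

section MultOp

variable {T : DirTree V} {P : Set V} {lam : V → ℝ}

local notation "𝓗" => lp (fun _ : V => ℂ) 2
local notation "⟪" x ", " y "⟫" => @inner ℂ _ _ x y

lemma mult_apply (hP : T.IsPath P) {φ : ℕ → ℂ} {M : 𝓗 →L[ℂ] 𝓗}
    (hM : IsMultOp T lam φ M) (x : 𝓗) (n : ℕ) :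
    M x (pth T P n) = ∑ k ∈ Finset.range (n + 1),
      (((∏ i ∈ Finset.range k, lam (T.par^[i] (pth T P n))) : ℝ) : ℂ) * φ k
        * x (pth T P (n - k)) := by
  rw [hM x (pth T P n), Gamma, depth_pth hP n]
  apply Finset.sum_congr rfl
  intro k hk
  have hk' : k ≤ n := by have := Finset.mem_range.1 hk; omega
  rw [wProd_pth hP hk', par_iter_pth hP k n hk']

lemma mult_symbol_eq (hP : T.IsPath P) {φ : ℕ → ℂ} {M : 𝓗 →L[ℂ] 𝓗}
    (hM : IsMultOp T lam φ M) (k : ℕ) :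
    M (ee T.root) (pth T P k) = ((wR T P lam k : ℝ) : ℂ) * φ k := by
  rw [mult_apply hP hM _ k, Finset.sum_eq_single k]
  · rw [Nat.sub_self]
    have h0 : (ee (v := T.root) : 𝓗) (pth T P 0) = 1 := ee_apply_self T.root
    rw [h0, prod_par_full hP k, mul_one]
  · intro b hb hbk
    have hb' : b < k := by have := Finset.mem_range.1 hb; omega
    have : (ee (v := T.root) : 𝓗) (pth T P (k - b)) = 0 :=
      ee_apply_ne (pth_ne_root hP (by omega))
    rw [this, mul_zero]
  · intro hk
    exact absurd (Finset.self_mem_range_succ k) hk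

lemma mult_symbol_norm_le (hP : T.IsPath P) (hlam : ∀ v, v ≠ T.root → 0 < lam v)
    {φ : ℕ → ℂ} {M : 𝓗 →L[ℂ] 𝓗} (hM : IsMultOp T lam φ M) (k : ℕ) :
    ‖φ k‖ ≤ ‖M‖ / wR T P lam k := by
  rw [le_div_iff₀ (wR_pos hP hlam k)]
  have h1 : ‖M (ee T.root) (pth T P k)‖ ≤ ‖M‖ := by
    calc ‖M (ee T.root) (pth T P k)‖ ≤ ‖M (ee T.root)‖ := coord_le_norm _ _
      _ ≤ ‖M‖ * ‖ee (v := T.root)‖ := M.le_opNorm _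
      _ = ‖M‖ := by rw [norm_ee, mul_one]
  rw [mult_symbol_eq hP hM k] at h1
  rw [norm_mul, Complex.norm_real, Real.norm_of_nonneg (wR_pos hP hlam k).le] at h1
  linarith [h1]

lemma inner_kz_mult (hP : T.IsPath P) (hlam : ∀ v, v ≠ T.root → 0 < lam v)
    {c C : ℝ} (hc : 0 < c) (hC : 1 ≤ C) (hkey : ∀ n, c ^ n ≤ C * wR T P lam n)
    {z : ℂ} (hz : ‖z‖ < c) (h : Memℓp (kfun T P lam z) 2)
    {φ : ℕ → ℂ} {M : 𝓗 →L[ℂ] 𝓗} (hM : IsMultOp T lam φ M) (x : 𝓗) :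
    ⟪kz T P lam z h, M x⟫ = (∑' k : ℕ, φ k * z ^ k) * ⟪kz T P lam z h, x⟫ := by
  set a : ℕ → ℂ := fun k => φ k * z ^ k with ha_def
  set b : ℕ → ℂ := fun m => z ^ m / ((wR T P lam m : ℝ) : ℂ) * x (pth T P m) with hb_def
  have ha : Summable fun k => ‖a k‖ := by
    apply Summable.of_nonneg_of_le (fun k => norm_nonneg _) (fun k => ?_)
      (summable_geom_pow hc (norm_nonneg z) hz (‖M‖ * C))
    have h1 : ‖a k‖ = ‖φ k‖ * ‖z‖ ^ k := by rw [ha_def, norm_mul, norm_pow]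
    rw [h1]
    calc ‖φ k‖ * ‖z‖ ^ k ≤ (‖M‖ / wR T P lam k) * ‖z‖ ^ k := by
          apply mul_le_mul_of_nonneg_right (mult_symbol_norm_le hP hlam hM k)
            (pow_nonneg (norm_nonneg z) k)
      _ = ‖M‖ * (‖z‖ ^ k / wR T P lam k) := by ring
      _ ≤ ‖M‖ * (C * (‖z‖ / c) ^ k) :=
          mul_le_mul_of_nonneg_left
            (growth_bound hP hlam hc hC hkey k (norm_nonneg z)) (norm_nonneg M)
      _ = ‖M‖ * C * (‖z‖ / c) ^ k := by ring
  have hb : Summable fun m => ‖b m‖ := by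
    apply Summable.of_nonneg_of_le (fun m => norm_nonneg _) (fun m => ?_)
      (summable_geom_pow hc (norm_nonneg z) hz (C * ‖x‖))
    have h1 : ‖b m‖ = ‖z‖ ^ m / wR T P lam m * ‖x (pth T P m)‖ := by
      rw [hb_def, norm_mul, norm_div, norm_pow, Complex.norm_real,
        Real.norm_of_nonneg (wR_pos hP hlam m).le]
    rw [h1]
    calc ‖z‖ ^ m / wR T P lam m * ‖x (pth T P m)‖
        ≤ (C * (‖z‖ / c) ^ m) * ‖x‖ := by
          apply mul_le_mul (growth_bound hP hlam hc hC hkey m (norm_nonneg z))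
            (coord_le_norm x _) (norm_nonneg _)
          positivity
      _ = C * ‖x‖ * (‖z‖ / c) ^ m := by ring
  have cauchy := tsum_mul_tsum_eq_tsum_sum_range_of_summable_norm ha hb
  calc ⟪kz T P lam z h, M x⟫
      = ∑' n : ℕ, z ^ n / ((wR T P lam n : ℝ) : ℂ) * (M x (pth T P n)) :=
        inner_kz hP z h (M x)
    _ = ∑' n : ℕ, ∑ k ∈ Finset.range (n + 1), a k * b (n - k) := by
        apply tsum_congr
        intro n
        rw [mult_apply hP hM x n, Finset.mul_sum]
        apply Finset.sum_congr rfl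
        intro k hk
        have hk' : k ≤ n := by have := Finset.mem_range.1 hk; omega
        have hwn : ((wR T P lam n : ℝ) : ℂ) ≠ 0 := by
          exact_mod_cast (wR_pos hP hlam n).ne'
        have hwk : ((wR T P lam (n - k) : ℝ) : ℂ) ≠ 0 := by
          exact_mod_cast (wR_pos hP hlam (n - k)).ne'
        have hp : (((∏ i ∈ Finset.range k, lam (T.par^[i] (pth T P n))) : ℝ) : ℂ)
            = ((wR T P lam n : ℝ) : ℂ) / ((wR T P lam (n - k) : ℝ) : ℂ) :=
          eq_div_iff hwk |>.2 (prod_par_cast hP hk')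
        have hzn : (z : ℂ) ^ n = z ^ k * z ^ (n - k) := by
          rw [← pow_add]
          congr 1
          omega
        rw [hp, hzn, ha_def, hb_def]
        field_simp
    _ = (∑' k : ℕ, a k) * (∑' m : ℕ, b m) := cauchy.symm
    _ = (∑' k : ℕ, φ k * z ^ k) * ⟪kz T P lam z h, x⟫ := by
        rw [inner_kz hP z h x]

end MultOp

section Invariance

variable {T : DirTree V} {P : Set V} {lam : V → ℝ}

local notation "𝓗" => lp (fun _ : V => ℂ) 2
local notation "⟪" x ", " y "⟫" => @inner ℂ _ _ x y

variable (P) in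
def KP : Submodule ℂ (lp (fun _ : V => ℂ) 2) where
  carrier := {x : 𝓗 | ∀ v ∈ P, x v = 0}
  add_mem' := fun {x y} hx hy v hv => by
    rw [lp.coeFn_add, Pi.add_apply, hx v hv, hy v hv, add_zero]
  zero_mem' := fun v hv => by rw [lp.coeFn_zero, Pi.zero_apply]
  smul_mem' := fun cc x hx v hv => by
    rw [lp.coeFn_smul, Pi.smul_apply, hx v hv, smul_zero]

lemma mem_KP {x : 𝓗} : x ∈ KP (V := V) P ↔ ∀ v ∈ P, x v = 0 := Iff.rfl

lemma KP_closed : IsClosed ((KP (V := V) P : Set 𝓗)) := by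
  have h : (KP (V := V) P : Set 𝓗) = ⋂ v ∈ P, {x : 𝓗 | x v = 0} := by
    ext x
    simp only [Set.mem_iInter, Set.mem_setOf_eq]
    exact mem_KP
  rw [h]
  exact isClosed_biInter fun v hv => isClosed_eq (continuous_eval v) continuous_const

lemma KP_inv (hP : T.IsPath P) {φ : ℕ → ℂ} {M : 𝓗 →L[ℂ] 𝓗} (hM : IsMultOp T lam φ M)
    {x : 𝓗} (hx : x ∈ KP (V := V) P) : M x ∈ KP (V := V) P := by
  intro v hv
  have hveq := mem_P_eq_pth hP hv
  rw [hveq, mult_apply hP hM]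
  apply Finset.sum_eq_zero
  intro k hk
  rw [hx _ (pth_mem hP _), mul_zero]

lemma inner_kz_A (hP : T.IsPath P) (hlam : ∀ v, v ≠ T.root → 0 < lam v)
    {c C : ℝ} (hc : 0 < c) (hC : 1 ≤ C) (hkey : ∀ n, c ^ n ≤ C * wR T P lam n)
    (A : 𝓗 →L[ℂ] 𝓗)
    (hA : ∀ K : Submodule ℂ (lp (fun _ : V => ℂ) 2),
      IsClosed (K : Set (lp (fun _ : V => ℂ) 2)) →
      (∀ φ : ℕ → ℂ, ∀ M : lp (fun _ : V => ℂ) 2 →L[ℂ] lp (fun _ : V => ℂ) 2,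
        IsMultOp T lam φ M → ∀ f ∈ K, M f ∈ K) →
      ∀ f ∈ K, A f ∈ K)
    {z : ℂ} (hz : ‖z‖ < c) (h : Memℓp (kfun T P lam z) 2) (x : 𝓗) :
    ⟪kz T P lam z h, A x⟫ = ⟪kz T P lam z h, A (ee T.root)⟫ * ⟪kz T P lam z h, x⟫ := by
  set kk := kz T P lam z h with hkk
  set Kz : Submodule ℂ (lp (fun _ : V => ℂ) 2) := LinearMap.ker ((innerSL ℂ kk : 𝓗 →L[ℂ] ℂ) : 𝓗 →ₗ[ℂ] ℂ) with hKz
  have hKzmem : ∀ y : 𝓗, y ∈ Kz ↔ ⟪kk, y⟫ = 0 := by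
    intro y
    rw [hKz, LinearMap.mem_ker]
    exact Iff.rfl
  have hKzc : IsClosed (Kz : Set 𝓗) := ContinuousLinearMap.isClosed_ker _
  have hKinv : ∀ φ : ℕ → ℂ, ∀ M : 𝓗 →L[ℂ] 𝓗, IsMultOp T lam φ M →
      ∀ f ∈ Kz, M f ∈ Kz := by
    intro φ M hM f hf
    rw [hKzmem] at hf ⊢
    rw [hkk] at hf ⊢
    rw [inner_kz_mult hP hlam hc hC hkey hz h hM f, hf, mul_zero]
  have hAinv := hA Kz hKzc hKinv
  have hy : (x - ⟪kk, x⟫ • ee T.root) ∈ Kz := by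
    rw [hKzmem, inner_sub_right, inner_smul_right, hkk, inner_kz_root hP z h, mul_one, sub_self]
  have h2 := hAinv _ hy
  rw [hKzmem, map_sub, map_smul, inner_sub_right, inner_smul_right, sub_eq_zero] at h2
  rw [h2]
  ring

end Invariance

section Entry

variable {T : DirTree V} {P : Set V} {lam : V → ℝ}

local notation "𝓗" => lp (fun _ : V => ℂ) 2
local notation "⟪" x ", " y "⟫" => @inner ℂ _ _ x y

lemma A_entry (hP : T.IsPath P) (hlam : ∀ v, v ≠ T.root → 0 < lam v)
    {c C : ℝ} (hc : 0 < c) (hC : 1 ≤ C) (hkey : ∀ n, c ^ n ≤ C * wR T P lam n)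
    (A : 𝓗 →L[ℂ] 𝓗)
    (hA : ∀ K : Submodule ℂ (lp (fun _ : V => ℂ) 2),
      IsClosed (K : Set (lp (fun _ : V => ℂ) 2)) →
      (∀ φ : ℕ → ℂ, ∀ M : lp (fun _ : V => ℂ) 2 →L[ℂ] lp (fun _ : V => ℂ) 2,
        IsMultOp T lam φ M → ∀ f ∈ K, M f ∈ K) →
      ∀ f ∈ K, A f ∈ K)
    (m n : ℕ) :
    A (ee (pth T P m)) (pth T P n)
      = if m ≤ n then
          (((∏ i ∈ Finset.range (n - m), lam (T.par^[i] (pth T P n))) : ℝ) : ℂ)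
            * ((A (ee T.root)) (pth T P (n - m)) / ((wR T P lam (n - m) : ℝ) : ℂ))
        else 0 := by
  have hwc : ∀ j, ((wR T P lam j : ℝ) : ℂ) ≠ 0 := fun j => by
    exact_mod_cast (wR_pos hP hlam j).ne'
  have hwr : ∀ j, (0:ℝ) < wR T P lam j := wR_pos hP hlam
  set φ0 : ℕ → ℂ := fun k => (A (ee T.root)) (pth T P k) / ((wR T P lam k : ℝ) : ℂ) with hφ0
  set c1 : ℕ → ℂ :=
    fun j => (A (ee (pth T P m))) (pth T P j) / ((wR T P lam j : ℝ) : ℂ) with hc1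
  set c2 : ℕ → ℂ :=
    fun j => if m ≤ j then φ0 (j - m) / ((wR T P lam m : ℝ) : ℂ) else 0 with hc2
  -- coefficient bounds
  have hcoef : ∀ (x : ℂ) (j : ℕ), ‖x‖ ≤ ‖A‖ →
      ‖x / ((wR T P lam j : ℝ) : ℂ)‖ * c ^ j ≤ ‖A‖ * C := by
    intro x j hx
    rw [norm_div, Complex.norm_real, Real.norm_of_nonneg (hwr j).le,
      div_mul_eq_mul_div, div_le_iff₀ (hwr j)]
    calc ‖x‖ * c ^ j ≤ ‖A‖ * c ^ j :=
          mul_le_mul_of_nonneg_right hx (pow_nonneg hc.le j)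
      _ ≤ ‖A‖ * (C * wR T P lam j) :=
          mul_le_mul_of_nonneg_left (hkey j) (norm_nonneg A)
      _ = ‖A‖ * C * wR T P lam j := by ring
  have hAnorm : ∀ (j k : ℕ), ‖A (ee (pth T P j)) (pth T P k)‖ ≤ ‖A‖ := by
    intro j k
    calc ‖A (ee (pth T P j)) (pth T P k)‖ ≤ ‖A (ee (pth T P j))‖ := coord_le_norm _ _
      _ ≤ ‖A‖ * ‖ee (v := pth T P j)‖ := A.le_opNorm _
      _ = ‖A‖ := by rw [norm_ee, mul_one]
  have hAnorm0 : ∀ k : ℕ, ‖A (ee T.root) (pth T P k)‖ ≤ ‖A‖ := by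
    intro k
    exact hAnorm 0 k
  have hb1 : ∀ j, ‖c1 j‖ * c ^ j ≤ ‖A‖ * C := fun j => hcoef _ j (hAnorm m j)
  have hφ0b : ∀ k, ‖φ0 k‖ * c ^ k ≤ ‖A‖ * C := fun k => hcoef _ k (hAnorm0 k)
  have hb2 : ∀ j, ‖c2 j‖ * c ^ j ≤ ‖A‖ * C * (c ^ m / wR T P lam m) := by
    intro j
    by_cases hj : m ≤ j
    · rw [hc2]
      simp only [if_pos hj]
      rw [norm_div, Complex.norm_real, Real.norm_of_nonneg (hwr m).le]
      have hcj : c ^ j = c ^ (j - m) * c ^ m := by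
        rw [← pow_add]
        congr 1
        omega
      rw [hcj]
      have h1 := hφ0b (j - m)
      calc ‖φ0 (j - m)‖ / wR T P lam m * (c ^ (j - m) * c ^ m)
          = (‖φ0 (j - m)‖ * c ^ (j - m)) * (c ^ m / wR T P lam m) := by ring
        _ ≤ ‖A‖ * C * (c ^ m / wR T P lam m) := by
            apply mul_le_mul_of_nonneg_right h1
            exact div_nonneg (pow_nonneg hc.le m) (hwr m).le
    · rw [hc2]
      simp only [if_neg hj, norm_zero, zero_mul]
      have h1 : (0:ℝ) ≤ c ^ m / wR T P lam m := div_nonneg (pow_nonneg hc.le m) (hwr m).le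
      have h2 : (0:ℝ) ≤ ‖A‖ * C := mul_nonneg (norm_nonneg A) (by linarith)
      nlinarith
  -- the formal power series
  set p1 := FormalMultilinearSeries.ofScalars ℂ c1 with hp1
  set p2 := FormalMultilinearSeries.ofScalars ℂ c2 with hp2
  have hrpos : (0 : ℝ≥0∞) < (c.toNNReal : ℝ≥0∞) := by
    exact_mod_cast Real.toNNReal_pos.2 hc
  have hcoe : ((c.toNNReal : NNReal) : ℝ) = c := Real.coe_toNNReal c hc.le
  have hrad1 : (c.toNNReal : ℝ≥0∞) ≤ p1.radius := by
    apply p1.le_radius_of_bound (‖A‖ * C)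
    intro j
    rw [hp1, FormalMultilinearSeries.ofScalars_norm, hcoe]
    exact hb1 j
  have hrad2 : (c.toNNReal : ℝ≥0∞) ≤ p2.radius := by
    apply p2.le_radius_of_bound (‖A‖ * C * (c ^ m / wR T P lam m))
    intro j
    rw [hp2, FormalMultilinearSeries.ofScalars_norm, hcoe]
    exact hb2 j
  have hfp1 : HasFPowerSeriesAt p1.sum p1 0 :=
    (p1.hasFPowerSeriesOnBall (lt_of_lt_of_le hrpos hrad1)).hasFPowerSeriesAt
  have hfp2 : HasFPowerSeriesAt p2.sum p2 0 :=
    (p2.hasFPowerSeriesOnBall (lt_of_lt_of_le hrpos hrad2)).hasFPowerSeriesAt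
  have hEq : p1.sum =ᶠ[nhds (0 : ℂ)] p2.sum := by
    filter_upwards [Metric.ball_mem_nhds (0 : ℂ) hc] with z hzb
    have hzc : ‖z‖ < c := by
      simpa [Metric.mem_ball, dist_zero_right] using hzb
    have hmem := kfun_memℓp hP hlam hc hC hkey hzc
    have hsum1 : p1.sum z = ∑' j : ℕ, c1 j * z ^ j := by
      rw [hp1]
      have := FormalMultilinearSeries.ofScalars_sum_eq (E := ℂ) c1 z
      rw [FormalMultilinearSeries.ofScalarsSum] at this
      rw [this]
      exact tsum_congr fun j => by rw [smul_eq_mul]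
    have hsum2 : p2.sum z = ∑' j : ℕ, c2 j * z ^ j := by
      rw [hp2]
      have := FormalMultilinearSeries.ofScalars_sum_eq (E := ℂ) c2 z
      rw [FormalMultilinearSeries.ofScalarsSum] at this
      rw [this]
      exact tsum_congr fun j => by rw [smul_eq_mul]
    rw [hsum1, hsum2]
    have hleft : ∑' j : ℕ, c1 j * z ^ j = ⟪kz T P lam z hmem, A (ee (pth T P m))⟫ := by
      rw [inner_kz hP z hmem]
      apply tsum_congr
      intro j
      rw [hc1]
      field_simp
    have hroot : ⟪kz T P lam z hmem, A (ee T.root)⟫ = ∑' k : ℕ, φ0 k * z ^ k := by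
      rw [inner_kz hP z hmem]
      apply tsum_congr
      intro k
      rw [hφ0]
      field_simp
    have hright : ∑' j : ℕ, c2 j * z ^ j
        = (∑' k : ℕ, φ0 k * z ^ k) * (z ^ m / ((wR T P lam m : ℝ) : ℂ)) := by
      have hg : Function.Injective (fun k : ℕ => k + m) := add_left_injective m
      have hsupp : Function.support (fun j => c2 j * z ^ j)
          ⊆ Set.range (fun k : ℕ => k + m) := by
        apply Function.support_subset_iff'.2
        intro j hj
        have hjm : ¬ m ≤ j := by
          intro hle
          exact hj ⟨j - m, show j - m + m = j by omega⟩
        rw [hc2]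
        simp only [if_neg hjm, zero_mul]
      rw [← Function.Injective.tsum_eq hg hsupp, ← tsum_mul_right]
      apply tsum_congr
      intro k
      have h1 : c2 (k + m) = φ0 k / ((wR T P lam m : ℝ) : ℂ) := by
        rw [hc2]
        simp only [if_pos (Nat.le_add_left m k), Nat.add_sub_cancel]
      rw [h1, pow_add]
      field_simp
    rw [hleft, hright,
      inner_kz_A hP hlam hc hC hkey A hA hzc hmem (ee (pth T P m)),
      inner_kz_ee hP z hmem m, hroot]
  have hps : p1 = p2 := hfp1.eq_formalMultilinearSeries_of_eventually hfp2 hEq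
  have hcc : c1 = c2 := by
    apply FormalMultilinearSeries.ofScalars_series_injective ℂ ℂ
    rw [← hp1, ← hp2, hps]
  have hn := congrFun hcc n
  have hrec : A (ee (pth T P m)) (pth T P n) = c1 n * ((wR T P lam n : ℝ) : ℂ) := by
    rw [hc1]
    exact (div_mul_cancel₀ _ (hwc n)).symm
  rw [hrec, hn]
  by_cases hmn : m ≤ n
  · rw [hc2]
    simp only [if_pos hmn]
    have hwn : (((∏ i ∈ Finset.range (n - m), lam (T.par^[i] (pth T P n))) : ℝ) : ℂ)
        * ((wR T P lam m : ℝ) : ℂ) = ((wR T P lam n : ℝ) : ℂ) := by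
      have := prod_par_cast (lam := lam) hP (show n - m ≤ n from Nat.sub_le n m)
      rw [show n - (n - m) = m from by omega] at this
      exact this
    rw [← hwn]
    have hx : φ0 (n - m)
        = (A (ee T.root)) (pth T P (n - m)) / ((wR T P lam (n - m) : ℝ) : ℂ) := rfl
    rw [← hx]
    field_simp
    rw [mul_assoc, mul_div_assoc, mul_div_cancel_left₀ _ (hwc m)]
  · rw [hc2]
    simp only [if_neg hmn, zero_mul]

end Entry

section Assembly

variable {T : DirTree V} {P : Set V} {lam : V → ℝ}

local notation "𝓗" => lp (fun _ : V => ℂ) 2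
local notation "⟪" x ", " y "⟫" => @inner ℂ _ _ x y

variable (T P lam) in
def phi0 (A : 𝓗 →L[ℂ] 𝓗) : ℕ → ℂ :=
  fun k => (A (ee T.root)) (pth T P k) / ((wR T P lam k : ℝ) : ℂ)

lemma A_offP (hP : T.IsPath P)
    (A : 𝓗 →L[ℂ] 𝓗)
    (hA : ∀ K : Submodule ℂ (lp (fun _ : V => ℂ) 2),
      IsClosed (K : Set (lp (fun _ : V => ℂ) 2)) →
      (∀ φ : ℕ → ℂ, ∀ M : lp (fun _ : V => ℂ) 2 →L[ℂ] lp (fun _ : V => ℂ) 2,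
        IsMultOp T lam φ M → ∀ f ∈ K, M f ∈ K) →
      ∀ f ∈ K, A f ∈ K)
    {v : V} (hv : v ∉ P) {w : V} (hw : w ∈ P) : A (ee v) w = 0 := by
  have h1 : (ee v : 𝓗) ∈ KP (V := V) P := by
    intro w' hw'
    exact ee_apply_ne (fun hh => hv (hh ▸ hw'))
  exact hA (KP P) KP_closed (fun φ M hM f hf => KP_inv hP hM hf) _ h1 w hw

lemma MP_prop1 (hP : T.IsPath P) (hlam : ∀ v, v ≠ T.root → 0 < lam v)
    {c C : ℝ} (hc : 0 < c) (hC : 1 ≤ C) (hkey : ∀ n, c ^ n ≤ C * wR T P lam n)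
    (A : 𝓗 →L[ℂ] 𝓗)
    (hA : ∀ K : Submodule ℂ (lp (fun _ : V => ℂ) 2),
      IsClosed (K : Set (lp (fun _ : V => ℂ) 2)) →
      (∀ φ : ℕ → ℂ, ∀ M : lp (fun _ : V => ℂ) 2 →L[ℂ] lp (fun _ : V => ℂ) 2,
        IsMultOp T lam φ M → ∀ f ∈ K, M f ∈ K) →
      ∀ f ∈ K, A f ∈ K)
    (f : 𝓗) (v : V) :
    ((Qop P).comp (A.comp (Qop P))) f v
      = Set.indicator P
          (Gamma T (fun u => (lam u : ℂ)) (phi0 T P lam A) (Set.indicator P (⇑f))) v := by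
  rw [ContinuousLinearMap.comp_apply, ContinuousLinearMap.comp_apply, Qop_apply]
  by_cases hv : v ∈ P
  · rw [Set.indicator_of_mem hv, Set.indicator_of_mem hv]
    obtain ⟨n, rfl⟩ : ∃ n, v = pth T P n := ⟨T.depth v, mem_P_eq_pth hP hv⟩
    set G : ℕ → ℂ := fun k => wProd T (fun u => (lam u : ℂ)) (pth T P n) k
      * phi0 T P lam A k * (Set.indicator P (⇑f)) (pth T P (n - k)) with hG
    have hcoord : ∀ v' : V,
        (starRingEnd ℂ) ((ContinuousLinearMap.adjoint A (ee (pth T P n))) v')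
          = A (ee v') (pth T P n) := by
      intro v'
      calc (starRingEnd ℂ) ((ContinuousLinearMap.adjoint A (ee (pth T P n))) v')
          = (starRingEnd ℂ) ⟪ee v', ContinuousLinearMap.adjoint A (ee (pth T P n))⟫ := by
            rw [inner_ee_left]
        _ = (starRingEnd ℂ) ⟪A (ee v'), ee (pth T P n)⟫ := by
            rw [ContinuousLinearMap.adjoint_inner_right]
        _ = (starRingEnd ℂ) ((starRingEnd ℂ) (A (ee v') (pth T P n))) := by
            rw [inner_ee_right]
        _ = A (ee v') (pth T P n) := Complex.conj_conj _
    calc A (Qop P f) (pth T P n)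
        = ⟪ee (pth T P n), A (Qop P f)⟫ := (inner_ee_left _ _).symm
      _ = ⟪ContinuousLinearMap.adjoint A (ee (pth T P n)), Qop P f⟫ :=
          (ContinuousLinearMap.adjoint_inner_left A (Qop P f) (ee (pth T P n))).symm
      _ = ∑' v' : V, (starRingEnd ℂ)
            ((ContinuousLinearMap.adjoint A (ee (pth T P n))) v') * (Qop P f v') :=
          inner_eq_tsum' _ _
      _ = ∑' v' : V, A (ee v') (pth T P n) * Qop P f v' :=
          tsum_congr fun v' => by rw [hcoord v']
      _ = ∑ v' ∈ Finset.image (pth T P) (Finset.range (n + 1)),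
            A (ee v') (pth T P n) * Qop P f v' := by
          apply tsum_eq_sum
          intro v' hv'
          by_cases hvP : v' ∈ P
          · have hd : ¬ T.depth v' ≤ n := by
              intro hle
              exact hv' (Finset.mem_image.2 ⟨T.depth v', Finset.mem_range.2 (by omega),
                (mem_P_eq_pth hP hvP).symm⟩)
            have hent := A_entry hP hlam hc hC hkey A hA (T.depth v') n
            rw [← mem_P_eq_pth hP hvP] at hent
            rw [hent, if_neg hd, zero_mul]
          · have h0 : Qop P f v' = 0 := by rw [Qop_apply, Set.indicator_of_notMem hvP]
            rw [h0, mul_zero]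
      _ = ∑ k ∈ Finset.range (n + 1), A (ee (pth T P k)) (pth T P n) * Qop P f (pth T P k) :=
          Finset.sum_image fun a _ b _ h => pth_inj hP h
      _ = ∑ k ∈ Finset.range (n + 1), G (n - k) := by
          apply Finset.sum_congr rfl
          intro k hk
          have hk' : k ≤ n := by have := Finset.mem_range.1 hk; omega
          rw [A_entry hP hlam hc hC hkey A hA k n, if_pos hk', hG]
          simp only []
          rw [wProd_pth hP (Nat.sub_le n k), show n - (n - k) = k from by omega]
          have hq : Qop P f (pth T P k) = Set.indicator P (⇑f) (pth T P k) := rfl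
          rw [hq]
          have hph : phi0 T P lam A (n - k)
              = (A (ee T.root)) (pth T P (n - k)) / ((wR T P lam (n - k) : ℝ) : ℂ) := rfl
          rw [hph]
      _ = ∑ k ∈ Finset.range (n + 1), G k := by
          have := Finset.sum_range_reflect G (n + 1)
          simpa using this
      _ = Gamma T (fun u => (lam u : ℂ)) (phi0 T P lam A) (Set.indicator P (⇑f))
            (pth T P n) := by
          rw [Gamma, depth_pth hP n]
          apply Finset.sum_congr rfl
          intro k hk
          have hk' : k ≤ n := by have := Finset.mem_range.1 hk; omega
          rw [hG]
          simp only []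
          rw [par_iter_pth hP k n hk']
  · rw [Set.indicator_of_notMem hv, Set.indicator_of_notMem hv]

lemma MP_prop2 (hP : T.IsPath P)
    (A : 𝓗 →L[ℂ] 𝓗)
    (hA : ∀ K : Submodule ℂ (lp (fun _ : V => ℂ) 2),
      IsClosed (K : Set (lp (fun _ : V => ℂ) 2)) →
      (∀ φ : ℕ → ℂ, ∀ M : lp (fun _ : V => ℂ) 2 →L[ℂ] lp (fun _ : V => ℂ) 2,
        IsMultOp T lam φ M → ∀ f ∈ K, M f ∈ K) →
      ∀ f ∈ K, A f ∈ K)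
    (f : 𝓗) (hf : ∀ v ∉ P, f v = 0) :
    ContinuousLinearMap.adjoint A f
      = ContinuousLinearMap.adjoint ((Qop P).comp (A.comp (Qop P))) f := by
  have hadj : ContinuousLinearMap.adjoint ((Qop P).comp (A.comp (Qop P)))
      = ((Qop P).comp ((ContinuousLinearMap.adjoint A).comp (Qop P))) := by
    rw [ContinuousLinearMap.adjoint_comp, ContinuousLinearMap.adjoint_comp, Qop_adjoint]
    rfl
  have hQf : Qop P f = f := by
    apply lp.ext
    funext v
    by_cases hv : v ∈ P
    · rw [Qop_apply, Set.indicator_of_mem hv]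
    · rw [Qop_apply, Set.indicator_of_notMem hv, hf v hv]
  have hsup : ∀ v ∉ P, (ContinuousLinearMap.adjoint A f) v = 0 := by
    intro v hv
    rw [← inner_ee_left v (ContinuousLinearMap.adjoint A f),
      ContinuousLinearMap.adjoint_inner_right, inner_eq_tsum']
    rw [show (0 : ℂ) = ∑' _ : V, (0 : ℂ) from tsum_zero.symm]
    apply tsum_congr
    intro w
    by_cases hw : w ∈ P
    · rw [A_offP hP A hA hv hw, map_zero, zero_mul]
    · rw [hf w hw, mul_zero]
  have hQA : Qop P (ContinuousLinearMap.adjoint A f) = ContinuousLinearMap.adjoint A f := by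
    apply lp.ext
    funext v
    by_cases hv : v ∈ P
    · rw [Qop_apply, Set.indicator_of_mem hv]
    · rw [Qop_apply, Set.indicator_of_notMem hv, hsup v hv]
  rw [hadj, ContinuousLinearMap.comp_apply, ContinuousLinearMap.comp_apply, hQf, hQA]

lemma prop1_symbol (hP : T.IsPath P) {φa : ℕ → ℂ} {Ma : 𝓗 →L[ℂ] 𝓗}
    (h : ∀ f : 𝓗, ∀ v : V,
      Ma f v = Set.indicator P (Gamma T (fun u => (lam u : ℂ)) φa (Set.indicator P (⇑f))) v)
    (n : ℕ) :
    Ma (ee T.root) (pth T P n) = ((wR T P lam n : ℝ) : ℂ) * φa n := by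
  rw [h (ee T.root) (pth T P n), Set.indicator_of_mem (pth_mem hP n), Gamma, depth_pth hP n]
  rw [Finset.sum_eq_single n]
  · rw [par_iter_pth hP n n le_rfl, Nat.sub_self,
      Set.indicator_of_mem (pth_mem hP 0)]
    have h0 : (ee (v := T.root) : 𝓗) (pth T P 0) = 1 := ee_apply_self T.root
    rw [h0, mul_one, wProd_pth hP le_rfl, prod_par_full hP n]
  · intro b hb hbn
    have hb' : b < n := by have := Finset.mem_range.1 hb; omega
    rw [par_iter_pth hP b n (by omega), Set.indicator_of_mem (pth_mem hP (n - b))]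
    have h0 : (ee (v := T.root) : 𝓗) (pth T P (n - b)) = 0 :=
      ee_apply_ne (pth_ne_root hP (by omega))
    rw [h0, mul_zero]
  · intro hn
    exact absurd (Finset.self_mem_range_succ n) hn

end Assembly

end Stmt10

open Stmt10 in
/-- Lemma (ii): if `A ∈ Alg Lat ℳ(λ)` and `𝒫` is a path with
`r₂^𝒫(S_λ) > 0`, then there is a unique symbol `φ_𝒫 : ℕ₀ → ℂ` such that
`A*` restricted to `ℓ²(V_𝒫)` equals the adjoint of the multiplication operator
`M^{λ_𝒫}_{φ_𝒫}` relative to the path (extended by `0` on `ℓ²(V_𝒫)^⊥`). -/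
theorem stmt10 [Countable V] [Infinite V] (T : DirTree V) (hTl : T.Leafless)
    (lam : V → ℝ) (hlam : ∀ v, v ≠ T.root → 0 < lam v)
    (S : lp (fun _ : V => ℂ) 2 →L[ℂ] lp (fun _ : V => ℂ) 2) (hS : IsShift T lam S)
    (A : lp (fun _ : V => ℂ) 2 →L[ℂ] lp (fun _ : V => ℂ) 2)
    (hA : ∀ K : Submodule ℂ (lp (fun _ : V => ℂ) 2),
      IsClosed (K : Set (lp (fun _ : V => ℂ) 2)) →
      (∀ φ : ℕ → ℂ, ∀ M : lp (fun _ : V => ℂ) 2 →L[ℂ] lp (fun _ : V => ℂ) 2,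
        IsMultOp T lam φ M → ∀ f ∈ K, M f ∈ K) →
      ∀ f ∈ K, A f ∈ K)
    (P : Set V) (hP : T.IsPath P)
    (hr : ∃ c : ℝ, 0 < c ∧ ∃ N : ℕ, ∀ v ∈ P, N ≤ T.depth v →
      c ≤ (∏ n ∈ Finset.range (T.depth v), lam (T.par^[n] v)) ^ ((T.depth v : ℝ)⁻¹)) :
    ∃! φP : ℕ → ℂ, ∃ MP : lp (fun _ : V => ℂ) 2 →L[ℂ] lp (fun _ : V => ℂ) 2,
      (∀ f : lp (fun _ : V => ℂ) 2, ∀ v : V,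
        MP f v = Set.indicator P
          (Gamma T (fun u => (lam u : ℂ)) φP (Set.indicator P (⇑f))) v) ∧
      (∀ f : lp (fun _ : V => ℂ) 2, (∀ v ∉ P, f v = 0) →
        ContinuousLinearMap.adjoint A f = ContinuousLinearMap.adjoint MP f) := by
  classical
  obtain ⟨c, hc, N, hN⟩ := hr
  obtain ⟨C, hC, hkey⟩ := growth_const hP hlam hc hN
  have hwc : ∀ j, ((wR T P lam j : ℝ) : ℂ) ≠ 0 := fun j => by
    exact_mod_cast (wR_pos hP hlam j).ne'
  refine ⟨phi0 T P lam A, ⟨(Qop P).comp (A.comp (Qop P)),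
    MP_prop1 hP hlam hc hC hkey A hA,
    MP_prop2 hP A hA⟩, ?_⟩
  rintro φ' ⟨M', h1', h2'⟩
  funext k
  have hsupp : ∀ v ∉ P, (ee (pth T P k) : lp (fun _ : V => ℂ) 2) v = 0 := fun v hv =>
    ee_apply_ne (fun hh => hv (hh ▸ pth_mem hP k))
  have e1 := h2' (ee (pth T P k)) hsupp
  have e2 := MP_prop2 hP A hA (ee (pth T P k)) hsupp
  have e3 : ContinuousLinearMap.adjoint M' (ee (pth T P k))
      = ContinuousLinearMap.adjoint ((Qop P).comp (A.comp (Qop P))) (ee (pth T P k)) := by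
    rw [← e1, ← e2]
  have e4 : @inner ℂ _ _ (M' (ee T.root)) (ee (pth T P k))
      = @inner ℂ _ _ (((Qop P).comp (A.comp (Qop P))) (ee T.root)) (ee (pth T P k)) := by
    rw [← ContinuousLinearMap.adjoint_inner_right M' (ee T.root) (ee (pth T P k)),
      ← ContinuousLinearMap.adjoint_inner_right ((Qop P).comp (A.comp (Qop P)))
        (ee T.root) (ee (pth T P k)), e3]
  rw [inner_ee_right, inner_ee_right] at e4
  have e5 := (starRingEnd ℂ).injective e4
  rw [prop1_symbol hP h1' k,
    prop1_symbol hP (MP_prop1 hP hlam hc hC hkey A hA) k] at e5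
  exact mul_left_cancel₀ (hwc k) e5
end
end

section
/- Let S_λ be the classical weighted shift on ℓ²(ℕ₀) (i.e., S_λ e_{n} = λ_{n+1} e_{n+1}) with weights λ_1 = 1 and λ_n = n/(n−1) for n ≥ 2. Then S_λ is bounded, ‖S_λⁿ‖ = n+1 for every n ∈ ℕ, the spectral radius of S_λ equals 1, the power series ∑_{k=1}^∞ k^{−3/2} z^k defines a bounded analytic function on the open unit disc, and yet the function φ̂ : ℕ₀ → ℂ given by φ̂(0) = 0 and φ̂(k) = k^{−3/2} for k ≥ 1 does not belong to the multiplier algebra 𝓜(λ); indeed ∑_{k=1}^∞ |k·φ̂(k)|² = ∑_{k=1}^∞ 1/k = ∞, so Γ_φ e_0 ∉ ℓ²(ℕ₀). -/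
open Filter Finset Classical

set_option linter.unusedVariables false
open scoped ComplexConjugate ENNReal

noncomputable section
attribute [local instance] Classical.propDecidable

variable {V : Type*}

/-- The directed tree `ℕ₀` with edges `n → n+1` (the classical unilateral shift tree). -/
def natTree : DirTree ℕ where
  root := 0
  par n := n - 1
  depth := id
  par_root := rfl
  depth_eq_zero := fun _ => Iff.rfl
  depth_par := fun v hv => Nat.succ_pred_eq_of_pos (Nat.pos_of_ne_zero hv)

/-- The weights `λ₁ = 1`, `λ_n = n/(n-1)` for `n ≥ 2`. -/
def lam12 : ℕ → ℝ := fun n => if n ≤ 1 then 1 else (n : ℝ) / ((n : ℝ) - 1)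

/-- The symbol `φ(0) = 0`, `φ(k) = k^{-3/2}` for `k ≥ 1`. -/
def phi12 : ℕ → ℂ := fun k => if k = 0 then 0 else (((k : ℝ) ^ (-(3/2 : ℝ)) : ℝ) : ℂ)


/-! ### Auxiliary development -/

namespace Stmt12Aux

open scoped Topology NNReal

lemma lam12_nonneg (n : ℕ) : 0 ≤ lam12 n := by
  unfold lam12
  split
  · norm_num
  · next h =>
    have h2 : (2:ℝ) ≤ (n:ℝ) := by exact_mod_cast Nat.not_le.mp h
    exact div_nonneg (by linarith) (by linarith)

lemma lam12_le_two (n : ℕ) : lam12 n ≤ 2 := by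
  unfold lam12
  split
  · norm_num
  · next h =>
    have h2 : (2:ℝ) ≤ (n:ℝ) := by exact_mod_cast Nat.not_le.mp h
    rw [div_le_iff₀ (by linarith)]
    linarith

lemma natTree_par_iter (j v : ℕ) : natTree.par^[j] v = v - j := by
  induction j with
  | zero => rfl
  | succ j ih =>
    rw [Function.iterate_succ_apply', ih]
    show (v - j) - 1 = v - (j+1)
    omega

/-- The coefficient `c n v = λ_v λ_{v-1} ⋯ λ_{v-n+1}`. -/
def cw (n v : ℕ) : ℝ := ∏ j ∈ Finset.range n, lam12 (v - j)

lemma cw_nonneg (n v : ℕ) : 0 ≤ cw n v :=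
  Finset.prod_nonneg fun j _ => lam12_nonneg _

lemma cw_zero (v : ℕ) : cw 0 v = 1 := by simp [cw]

lemma cw_one (v : ℕ) : cw 1 v = lam12 v := by simp [cw]

lemma cw_succ (n v : ℕ) : cw (n+1) v = cw n v * lam12 (v - n) := by
  simp [cw, Finset.prod_range_succ]

lemma lam12_mul_max (m : ℕ) (hm : 1 ≤ m) :
    lam12 m * ((max (m-1) 1 : ℕ) : ℝ) = (m : ℝ) := by
  rcases eq_or_lt_of_le hm with h | h
  · rw [← h]; norm_num [lam12]
  · have h2 : 2 ≤ m := h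
    have : ¬ m ≤ 1 := by omega
    rw [lam12, if_neg this]
    have hmax : max (m-1) 1 = m - 1 := by omega
    rw [hmax]
    have hc : ((m - 1 : ℕ) : ℝ) = (m:ℝ) - 1 := by
      push_cast [Nat.cast_sub (by omega : 1 ≤ m)]; ring
    rw [hc]
    have h2r : (2:ℝ) ≤ (m:ℝ) := by exact_mod_cast h2
    rw [div_mul_cancel₀ _ (by linarith : (m:ℝ) - 1 ≠ 0)]

lemma cw_formula (n v : ℕ) (h : n ≤ v) :
    cw n v * ((max (v - n) 1 : ℕ) : ℝ) = ((max v 1 : ℕ) : ℝ) := by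
  induction n with
  | zero => simp [cw_zero]
  | succ n ih =>
    have hn : n ≤ v := by omega
    have hvn : 1 ≤ v - n := by omega
    have hmax : max (v - n) 1 = v - n := by omega
    have h1 : cw n v * ((v - n : ℕ) : ℝ) = ((max v 1 : ℕ) : ℝ) := by
      rw [← hmax]; exact ih hn
    have h2 := lam12_mul_max (v - n) hvn
    have hsub : v - (n+1) = (v - n) - 1 := by omega
    rw [cw_succ, hsub]
    calc cw n v * lam12 (v - n) * ((max ((v-n) - 1) 1 : ℕ) : ℝ)
        = cw n v * (lam12 (v - n) * ((max ((v-n)-1) 1 : ℕ) : ℝ)) := by ring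
      _ = cw n v * ((v - n : ℕ) : ℝ) := by rw [h2]
      _ = ((max v 1 : ℕ) : ℝ) := h1


lemma max_pos_real (a : ℕ) : (0:ℝ) < ((max a 1 : ℕ) : ℝ) := by
  have : 1 ≤ max a 1 := le_max_right _ _
  exact_mod_cast this

lemma cw_le (n v : ℕ) (h : n ≤ v) : cw n v ≤ (n:ℝ) + 1 := by
  have hnat : (max v 1 : ℕ) ≤ (n+1) * max (v - n) 1 := by
    rcases Nat.eq_zero_or_pos (v - n) with h0 | h1
    · have h1 : max (v-n) 1 = 1 := by omega
      rw [h1, mul_one]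
      omega
    · have hmax : max (v - n) 1 = v - n := by omega
      have hv1 : max v 1 = v := by omega
      rw [hmax, hv1]
      have hmul : (n+1) * (v - n) = n * (v-n) + (v - n) := by ring
      have hn : n * 1 ≤ n * (v - n) := Nat.mul_le_mul_left n h1
      omega
  have hform := cw_formula n v h
  have hpos := max_pos_real (v - n)
  have hreal : ((max v 1 : ℕ) : ℝ) ≤ ((n:ℝ)+1) * ((max (v-n) 1 : ℕ) : ℝ) := by
    push_cast
    exact_mod_cast hnat
  nlinarith [cw_nonneg n v, hpos, hform, hreal]

lemma cw_self_succ (n : ℕ) : cw n (n+1) = (n:ℝ) + 1 := by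
  have h := cw_formula n (n+1) (by omega)
  have h1 : max ((n+1) - n) 1 = 1 := by omega
  have h2 : max (n+1) 1 = n+1 := by omega
  rw [h1, h2] at h
  push_cast at h
  linarith

/-- The `n`-step shift as a raw function. -/
def sh (n : ℕ) (f : ℕ → ℂ) : ℕ → ℂ :=
  fun v => if v < n then 0 else (cw n v : ℂ) * f (v - n)

lemma sh_apply_add (n : ℕ) (f : ℕ → ℂ) (w : ℕ) :
    sh n f (w + n) = (cw n (w+n) : ℂ) * f w := by
  simp [sh, Nat.add_sub_cancel]

lemma sh_normsq_add (n : ℕ) (f : ℕ → ℂ) (w : ℕ) :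
    ‖sh n f (w + n)‖^2 = (cw n (w+n))^2 * ‖f w‖^2 := by
  rw [sh_apply_add, norm_mul, mul_pow, Complex.norm_real, Real.norm_eq_abs,
    abs_of_nonneg (cw_nonneg _ _)]

lemma sh_eq_zero (n : ℕ) (f : ℕ → ℂ) (v : ℕ) (hv : v < n) : sh n f v = 0 := by
  simp [sh, hv]

lemma range_addn (n : ℕ) (v : ℕ) (hv : ¬ v < n) : v ∈ Set.range (· + n) :=
  ⟨v - n, by show v - n + n = v; omega⟩

lemma cwsq_le (n w : ℕ) : (cw n (w+n))^2 ≤ ((n:ℝ)+1)^2 := by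
  have h1 := cw_le n (w+n) (by omega)
  have h2 := cw_nonneg n (w+n)
  nlinarith

lemma summable_cw_mul {f : ℕ → ℂ} (n : ℕ) (hf : Summable fun w => ‖f w‖^2) :
    Summable fun w => (cw n (w+n))^2 * ‖f w‖^2 := by
  apply Summable.of_nonneg_of_le
    (fun w => by have := cw_nonneg n (w+n); positivity)
    (fun w => mul_le_mul_of_nonneg_right (cwsq_le n w) (by positivity))
    (hf.mul_left (((n:ℝ)+1)^2))

lemma summable_sh {n : ℕ} {f : ℕ → ℂ} (hf : Summable fun w => ‖f w‖^2) :
    Summable fun v => ‖sh n f v‖^2 := by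
  have hinj : Function.Injective (· + n) := add_left_injective n
  have hcomp : Summable ((fun v => ‖sh n f v‖^2) ∘ (· + n)) := by
    apply Summable.congr (summable_cw_mul n hf)
    intro w
    simp only [Function.comp_apply]
    exact (sh_normsq_add n f w).symm
  refine (hinj.summable_iff (fun v hv => ?_)).mp hcomp
  rcases Nat.lt_or_ge v n with h | h
  · simp [sh_eq_zero n f v h]
  · exact absurd (range_addn n v (by omega)) hv

lemma tsum_sh (n : ℕ) (f : ℕ → ℂ) :
    ∑' v, ‖sh n f v‖^2 = ∑' w, (cw n (w+n))^2 * ‖f w‖^2 := by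
  rw [← Function.Injective.tsum_eq (g := (· + n)) (add_left_injective n)
    (f := fun v => ‖sh n f v‖^2) ?_]
  · exact tsum_congr fun w => sh_normsq_add n f w
  · intro v hv
    rcases Nat.lt_or_ge v n with h | h
    · exact absurd (by simp [sh_eq_zero n f v h]) hv
    · exact range_addn n v (by omega)

lemma memℓp_two_iff (f : ℕ → ℂ) :
    Memℓp f 2 ↔ Summable (fun v => ‖f v‖^2) := by
  rw [memℓp_gen_iff (by norm_num : (0:ℝ) < (2:ℝ≥0∞).toReal)]
  have : (2:ℝ≥0∞).toReal = ((2:ℕ):ℝ) := by norm_num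
  simp_rw [this, Real.rpow_natCast]

lemma lp_norm_sq (f : lp (fun _ : ℕ => ℂ) 2) : ‖f‖^2 = ∑' v, ‖f v‖^2 := by
  have h := lp.norm_rpow_eq_tsum (by norm_num : (0:ℝ) < (2:ℝ≥0∞).toReal) f
  have h2 : (2:ℝ≥0∞).toReal = ((2:ℕ):ℝ) := by norm_num
  rw [h2] at h
  simp_rw [Real.rpow_natCast] at h
  exact h

lemma memℓp_sh (n : ℕ) (f : lp (fun _ : ℕ => ℂ) 2) : Memℓp (sh n ⇑f) 2 :=
  (memℓp_two_iff _).mpr (summable_sh ((memℓp_two_iff _).mp (lp.memℓp f)))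

lemma eq_of_sq_eq {a b : ℝ} (ha : 0 ≤ a) (hb : 0 ≤ b) (h : a^2 = b^2) : a = b := by
  nlinarith [sq_nonneg (a-b), sq_nonneg (a+b)]

lemma norm_le_of_coe_sh (n : ℕ) (F f : lp (fun _ : ℕ => ℂ) 2)
    (h : ⇑F = sh n ⇑f) : ‖F‖ ≤ ((n:ℝ)+1) * ‖f‖ := by
  have hf2 : Summable fun w => ‖(⇑f) w‖^2 := (memℓp_two_iff _).mp (lp.memℓp f)
  apply le_of_pow_le_pow_left₀ (two_ne_zero) (by positivity)
  rw [mul_pow, lp_norm_sq F, lp_norm_sq f]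
  calc ∑' v, ‖F v‖^2 = ∑' w, (cw n (w+n))^2 * ‖(⇑f) w‖^2 := by rw [h]; exact tsum_sh n ⇑f
    _ ≤ ∑' w, ((n:ℝ)+1)^2 * ‖(⇑f) w‖^2 := by
        apply Summable.tsum_le_tsum _ (summable_cw_mul n hf2) (hf2.mul_left _)
        intro w
        exact mul_le_mul_of_nonneg_right (cwsq_le n w) (by positivity)
    _ = ((n:ℝ)+1)^2 * ∑' w, ‖(⇑f) w‖^2 := tsum_mul_left


/-- The weighted shift as an element of `lp`. -/
def shLp (n : ℕ) (f : lp (fun _ : ℕ => ℂ) 2) : lp (fun _ : ℕ => ℂ) 2 :=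
  ⟨sh n ⇑f, memℓp_sh n f⟩

@[simp] lemma shLp_coe (n : ℕ) (f : lp (fun _ : ℕ => ℂ) 2) :
    ⇑(shLp n f) = sh n ⇑f := rfl

/-- The weighted shift operator `S_λ`. -/
def Sop : lp (fun _ : ℕ => ℂ) 2 →L[ℂ] lp (fun _ : ℕ => ℂ) 2 :=
  LinearMap.mkContinuous
    { toFun := shLp 1
      map_add' := by
        intro f g
        apply lp.ext
        funext v
        simp only [shLp_coe, lp.coeFn_add, Pi.add_apply, sh]
        split <;> ring
      map_smul' := by
        intro c f
        apply lp.ext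
        funext v
        simp only [shLp_coe, lp.coeFn_smul, Pi.smul_apply, RingHom.id_apply,
          smul_eq_mul, sh]
        split <;> ring }
    2 (fun f => by
      have := norm_le_of_coe_sh 1 (shLp 1 f) f (shLp_coe 1 f)
      norm_num at this
      exact this)

lemma Sop_coe (f : lp (fun _ : ℕ => ℂ) 2) : ⇑(Sop f) = sh 1 ⇑f := rfl

lemma Sop_pow_coe (n : ℕ) (f : lp (fun _ : ℕ => ℂ) 2) :
    ⇑((Sop ^ n) f) = sh n ⇑f := by
  induction n generalizing f with
  | zero =>
    funext v
    simp [pow_zero, sh, cw_zero, ContinuousLinearMap.one_apply]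
  | succ n ih =>
    rw [pow_succ, ContinuousLinearMap.mul_apply, ih (Sop f), Sop_coe]
    funext v
    simp only [sh]
    rcases Nat.lt_or_ge v n with h | h
    · rw [if_pos h, if_pos (by omega)]
    · rw [if_neg (by omega)]
      rcases Nat.lt_or_ge v (n+1) with h2 | h2
      · have : v - n < 1 := by omega
        rw [if_pos h2, if_pos this, mul_zero]
      · have h3 : ¬ v - n < 1 := by omega
        rw [if_neg (by omega : ¬ v < n + 1), if_neg h3]
        have h4 : v - n - 1 = v - (n+1) := by omega
        rw [h4]
        have h5 : cw (n+1) v = cw n v * lam12 (v - n) := cw_succ n v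
        have h6 : cw 1 (v - n) = lam12 (v - n) := cw_one (v - n)
        rw [h5, h6]
        push_cast
        ring

lemma e1_norm : ‖lp.single (E := fun _ : ℕ => ℂ) 2 1 (1:ℂ)‖ = 1 := by
  have := lp.norm_single (E := fun _ : ℕ => ℂ)
    (by norm_num : (0:ℝ≥0∞) < 2) 1 (1:ℂ)
  simpa using this

lemma Sop_pow_norm (n : ℕ) (hn : 1 ≤ n) : ‖Sop ^ n‖ = (n:ℝ) + 1 := by
  apply le_antisymm
  · apply ContinuousLinearMap.opNorm_le_bound _ (by positivity)
    intro f
    exact norm_le_of_coe_sh n _ f (Sop_pow_coe n f)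
  · let e : lp (fun _ : ℕ => ℂ) 2 := lp.single 2 1 (1:ℂ)
    have hnorm : ‖(Sop ^ n) e‖ = (n:ℝ) + 1 := by
      apply eq_of_sq_eq (norm_nonneg _) (by positivity)
      rw [lp_norm_sq]
      have hcoe := Sop_pow_coe n e
      have htsum : ∑' v, ‖((Sop ^ n) e) v‖^2 = ((n:ℝ)+1)^2 := by
        rw [show (fun v => ‖((Sop ^ n) e) v‖^2) = fun v => ‖sh n (⇑e) v‖^2 by
          funext v; rw [hcoe]]
        rw [tsum_eq_single (n+1) ?_]
        · rw [show n + 1 = 1 + n by omega, sh_normsq_add]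
          have : (⇑e) 1 = 1 := lp.single_apply_self (E := fun _ : ℕ => ℂ) 2 1 (1:ℂ)
          rw [this, show 1 + n = n + 1 by omega, cw_self_succ]
          simp
        · intro v hv
          rcases Nat.lt_or_ge v n with h | h
          · simp [sh_eq_zero n (⇑e) v h]
          · have hv1 : v - n ≠ 1 := by omega
            have : (⇑e) (v - n) = 0 := lp.single_apply_ne 2 1 _ hv1
            simp [sh, Nat.not_lt.mpr h, this]
      rw [htsum]
    have hle := ((Sop ^ n).le_opNorm e)
    have he_norm : ‖e‖ = 1 := e1_norm
    rw [hnorm, he_norm, mul_one] at hle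
    exact hle


lemma isShift_Sop : IsShift natTree lam12 Sop := by
  intro f v
  have hv := congrFun (Sop_coe f) v
  rw [hv]
  by_cases h : v = natTree.root
  · rw [if_pos h]
    have h0 : v = 0 := h
    subst h0
    simp [sh]
  · rw [if_neg h]
    have h0 : v ≠ 0 := h
    show sh 1 (⇑f) v = (lam12 v : ℂ) * f (v - 1)
    simp only [sh]
    rw [if_neg (by omega : ¬ v < 1), cw_one]

lemma tendsto_aux : Tendsto (fun n : ℕ => ((n:ℝ)+1) ^ (1/(n:ℝ))) atTop (𝓝 1) := by
  have hlog : Tendsto (fun n : ℕ => Real.log ((n:ℝ)+1) * (1/(n:ℝ))) atTop (𝓝 0) := by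
    have h1 : Tendsto (fun x : ℝ => Real.log x / x) atTop (𝓝 0) :=
      Real.isLittleO_log_id_atTop.tendsto_div_nhds_zero
    have h2 : Tendsto (fun n : ℕ => (n:ℝ)+1) atTop atTop :=
      tendsto_atTop_add_const_right _ 1 tendsto_natCast_atTop_atTop
    have h3 : Tendsto (fun n : ℕ => Real.log ((n:ℝ)+1) / ((n:ℝ)+1)) atTop (𝓝 0) :=
      h1.comp h2
    apply squeeze_zero' ?_ ?_ (by simpa using h3.const_mul 2)
    · filter_upwards [eventually_ge_atTop 1] with n hn
      have hn1 : (1:ℝ) ≤ (n:ℝ) := by exact_mod_cast hn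
      have hL : (0:ℝ) ≤ Real.log ((n:ℝ)+1) := Real.log_nonneg (by linarith)
      positivity
    · filter_upwards [eventually_ge_atTop 1] with n hn
      have hn1 : (1:ℝ) ≤ (n:ℝ) := by exact_mod_cast hn
      have hL : (0:ℝ) ≤ Real.log ((n:ℝ)+1) := Real.log_nonneg (by linarith)
      rw [mul_one_div, ← mul_div_assoc, div_le_div_iff₀ (by linarith) (by linarith)]
      nlinarith
  have hexp : Tendsto (fun n : ℕ => Real.exp (Real.log ((n:ℝ)+1) * (1/(n:ℝ)))) atTop (𝓝 1) := by
    have := (Real.continuous_exp.tendsto 0).comp hlog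
    simpa [Function.comp_def] using this
  apply hexp.congr'
  filter_upwards [eventually_ge_atTop 1] with n hn
  rw [Real.rpow_def_of_pos (by positivity)]

lemma spectral_Sop : spectralRadius ℂ Sop = 1 := by
  have hG := spectrum.pow_nnnorm_pow_one_div_tendsto_nhds_spectralRadius Sop
  have key : Tendsto (fun n : ℕ => (‖Sop ^ n‖₊ : ℝ≥0∞) ^ (1/(n:ℝ))) atTop (𝓝 1) := by
    have h2 : Tendsto (fun n : ℕ => ENNReal.ofReal (((n:ℝ)+1) ^ (1/(n:ℝ)))) atTop
        (𝓝 (ENNReal.ofReal 1)) := ENNReal.tendsto_ofReal tendsto_aux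
    rw [ENNReal.ofReal_one] at h2
    apply h2.congr'
    filter_upwards [eventually_ge_atTop 1] with n hn
    rw [← ENNReal.ofReal_coe_nnreal, coe_nnnorm, Sop_pow_norm n hn,
      ENNReal.ofReal_rpow_of_pos (by positivity : (0:ℝ) < (n:ℝ)+1)]
  exact tendsto_nhds_unique hG key

lemma phi_norm (k : ℕ) : ‖phi12 k‖ = (k:ℝ) ^ (-(3/2:ℝ)) := by
  unfold phi12
  rcases eq_or_ne k 0 with h | h
  · subst h
    simp [Real.zero_rpow (by norm_num : (-(3/2:ℝ)) ≠ 0)]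
  · rw [if_neg h, Complex.norm_real, Real.norm_eq_abs,
      abs_of_nonneg (Real.rpow_nonneg (by positivity) _)]

lemma phi_norm_le_one (k : ℕ) : ‖phi12 k‖ ≤ 1 := by
  rw [phi_norm]
  rcases eq_or_ne k 0 with h | h
  · subst h
    rw [Nat.cast_zero, Real.zero_rpow (by norm_num : (-(3/2:ℝ)) ≠ 0)]
    norm_num
  · exact Real.rpow_le_one_of_one_le_of_nonpos
      (by exact_mod_cast Nat.one_le_iff_ne_zero.mpr h) (by norm_num)

lemma summable_phi : Summable (fun k : ℕ => ‖phi12 k‖) := by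
  simp_rw [phi_norm]
  exact Real.summable_nat_rpow.mpr (by norm_num)

/-- The power series with coefficients `phi12`. -/
def P12 : FormalMultilinearSeries ℂ ℂ ℂ := FormalMultilinearSeries.ofScalars ℂ phi12

lemma P12_radius : 1 ≤ P12.radius := by
  have h := P12.le_radius_of_bound 1 (r := 1) ?_
  · simpa using h
  · intro n
    rw [show ((1:ℝ≥0):ℝ) = 1 by norm_num, one_pow, mul_one]
    rw [P12, FormalMultilinearSeries.ofScalars_norm]
    exact phi_norm_le_one n

lemma sum_eq_P12 : (fun z : ℂ => ∑' k, phi12 k * z ^ k) = P12.sum := by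
  funext z
  exact tsum_congr fun n => by
    rw [P12, FormalMultilinearSeries.ofScalars_apply_eq, smul_eq_mul]

lemma analytic_phi :
    AnalyticOnNhd ℂ (fun z : ℂ => ∑' k : ℕ, phi12 k * z ^ k) (Metric.ball 0 1) := by
  rw [sum_eq_P12]
  intro z hz
  apply (P12.hasFPowerSeriesOnBall (lt_of_lt_of_le one_pos P12_radius)).analyticOnNhd
  rw [EMetric.mem_ball, edist_dist]
  rw [Metric.mem_ball] at hz
  calc ENNReal.ofReal (dist z 0) < 1 := by
        rw [← ENNReal.ofReal_one]
        exact ENNReal.ofReal_lt_ofReal_iff_of_nonneg dist_nonneg |>.mpr hz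
    _ ≤ P12.radius := P12_radius

lemma bounded_phi : ∀ z ∈ Metric.ball (0:ℂ) 1,
    ‖∑' k : ℕ, phi12 k * z ^ k‖ ≤ ∑' k : ℕ, ‖phi12 k‖ := by
  intro z hz
  rw [Metric.mem_ball, dist_zero_right] at hz
  have hsummand : ∀ k, ‖phi12 k * z^k‖ ≤ ‖phi12 k‖ := fun k => by
    rw [norm_mul, norm_pow]
    calc ‖phi12 k‖ * ‖z‖^k ≤ ‖phi12 k‖ * 1 :=
          mul_le_mul_of_nonneg_left (pow_le_one₀ (norm_nonneg z) hz.le) (norm_nonneg _)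
      _ = ‖phi12 k‖ := mul_one _
  have hs : Summable fun k => ‖phi12 k * z^k‖ :=
    Summable.of_nonneg_of_le (fun k => norm_nonneg _) hsummand summable_phi
  calc ‖∑' k, phi12 k * z^k‖ ≤ ∑' k, ‖phi12 k * z^k‖ := norm_tsum_le_tsum_norm hs
    _ ≤ ∑' k, ‖phi12 k‖ := Summable.tsum_le_tsum hsummand hs summable_phi

lemma normsq_eq (k : ℕ) : ‖((k+1 : ℕ) : ℂ) * phi12 (k+1)‖^2 = 1/((k:ℝ)+1) := by
  have hx0 : (0:ℝ) < (k:ℝ)+1 := by positivity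
  rw [norm_mul, phi_norm]
  have h1 : ‖((k+1:ℕ):ℂ)‖ = (k:ℝ)+1 := by
    rw [Complex.norm_natCast]
    push_cast
    ring
  have hcast : (((k+1:ℕ)):ℝ) = (k:ℝ)+1 := by push_cast; ring
  rw [h1, hcast, mul_pow]
  have e1 : (((k:ℝ)+1) ^ (-(3/2:ℝ)))^2 = ((k:ℝ)+1) ^ (-(3:ℝ)) := by
    rw [← Real.rpow_natCast (((k:ℝ)+1) ^ (-(3/2:ℝ))) 2, ← Real.rpow_mul hx0.le]
    norm_num
  have e2 : ((k:ℝ)+1)^(2:ℕ) = ((k:ℝ)+1)^(2:ℝ) := by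
    rw [← Real.rpow_natCast ((k:ℝ)+1) 2]
    norm_num
  rw [e1, e2, ← Real.rpow_add hx0,
    show (2:ℝ) + -3 = -1 by norm_num, Real.rpow_neg_one, one_div]

lemma normsq_eq' (k : ℕ) : ‖(k:ℂ) * phi12 k‖^2 = 1/(k:ℝ) := by
  cases k with
  | zero => simp [phi12]
  | succ m =>
    have h := normsq_eq m
    rw [show ((m:ℝ)+1) = ((m+1:ℕ):ℝ) by push_cast; ring] at h
    exact_mod_cast h

lemma not_summable_ksq : ¬ Summable (fun k : ℕ => ‖(k:ℂ) * phi12 k‖^2) := by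
  intro h
  exact Real.not_summable_one_div_natCast (h.congr normsq_eq')

lemma wProd_eq (v k : ℕ) :
    wProd natTree (fun u => (lam12 u : ℂ)) v k = ((cw k v : ℝ) : ℂ) := by
  unfold wProd cw
  rw [Complex.ofReal_prod]
  exact Finset.prod_congr rfl fun j _ => by rw [natTree_par_iter]

lemma cw_self (v : ℕ) (hv : 1 ≤ v) : cw v v = (v:ℝ) := by
  have h := cw_formula v v le_rfl
  have h1 : max (v - v) 1 = 1 := by omega
  have h2 : max v 1 = v := by omega
  rw [h1, h2] at h
  push_cast at h
  linarith

lemma Gamma_e0 (g : ℕ → ℂ) (hg0 : g 0 = 1) (hg : ∀ n, n ≠ 0 → g n = 0) :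
    Gamma natTree (fun u => (lam12 u : ℂ)) phi12 g = fun v : ℕ => (v : ℂ) * phi12 v := by
  funext v
  unfold Gamma
  have hd : natTree.depth v = v := rfl
  rw [hd]
  rw [Finset.sum_eq_single v]
  · rw [natTree_par_iter, Nat.sub_self, hg0, mul_one, wProd_eq]
    rcases eq_or_ne v 0 with h | h
    · subst h
      simp [phi12]
    · rw [cw_self v (Nat.one_le_iff_ne_zero.mpr h)]
      norm_num
  · intro k hk hkv
    rw [natTree_par_iter]
    have hkle : k ≤ v := by
      have := Finset.mem_range.mp hk
      omega
    have : v - k ≠ 0 := by omega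
    rw [hg _ this, mul_zero]
  · intro hv
    exact absurd (Finset.mem_range.mpr (by omega)) hv

lemma not_memℓp_Gamma (g : ℕ → ℂ) (hg0 : g 0 = 1) (hg : ∀ n, n ≠ 0 → g n = 0) :
    ¬ Memℓp (Gamma natTree (fun u => (lam12 u : ℂ)) phi12 g) 2 := by
  intro h
  rw [Gamma_e0 g hg0 hg] at h
  exact not_summable_ksq ((memℓp_two_iff _).mp h)

lemma not_multOp :
    ¬ ∃ M : lp (fun _ : ℕ => ℂ) 2 →L[ℂ] lp (fun _ : ℕ => ℂ) 2,
        IsMultOp natTree lam12 phi12 M := by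
  rintro ⟨M, hM⟩
  let f0 : lp (fun _ : ℕ => ℂ) 2 := lp.single 2 0 (1:ℂ)
  have hcoe : ⇑(M f0) = Gamma natTree (fun u => (lam12 u : ℂ)) phi12 ⇑f0 :=
    funext (hM f0)
  have hmem : Memℓp (Gamma natTree (fun u => (lam12 u : ℂ)) phi12 ⇑f0) 2 :=
    hcoe ▸ lp.memℓp (M f0)
  exact not_memℓp_Gamma (⇑f0) (lp.single_apply_self (E := fun _ : ℕ => ℂ) 2 0 (1:ℂ))
    (fun n hn => lp.single_apply_ne 2 0 _ hn) hmem

end Stmt12Aux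


/-- Example: for the classical weighted shift with weights
`λ₁ = 1`, `λ_n = n/(n-1)`, one has `‖S_λⁿ‖ = n+1`, `r(S_λ) = 1`, the series
`∑ k^{-3/2} z^k` is a bounded analytic function on the unit disc, and yet its coefficient
sequence `φ` is not a multiplier: `∑_k |k·φ(k)|² = ∑ 1/k = ∞`, so `Γ_φ e₀ ∉ ℓ²`. -/
theorem stmt12 :
    ∃ S : lp (fun _ : ℕ => ℂ) 2 →L[ℂ] lp (fun _ : ℕ => ℂ) 2,
      IsShift natTree lam12 S ∧
      (∀ n : ℕ, 1 ≤ n → ‖S ^ n‖ = (n : ℝ) + 1) ∧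
      spectralRadius ℂ S = 1 ∧
      AnalyticOnNhd ℂ (fun z : ℂ => ∑' k : ℕ, phi12 k * z ^ k) (Metric.ball 0 1) ∧
      (∃ C : ℝ, ∀ z ∈ Metric.ball (0 : ℂ) 1, ‖∑' k : ℕ, phi12 k * z ^ k‖ ≤ C) ∧
      ¬ Summable (fun k : ℕ => ‖(k : ℂ) * phi12 k‖ ^ 2) ∧
      ¬ Memℓp (Gamma natTree (fun n => (lam12 n : ℂ)) phi12
          (fun n : ℕ => if n = 0 then 1 else 0)) 2 ∧
      ¬ ∃ M : lp (fun _ : ℕ => ℂ) 2 →L[ℂ] lp (fun _ : ℕ => ℂ) 2,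
          IsMultOp natTree lam12 phi12 M := by
  refine ⟨Stmt12Aux.Sop, Stmt12Aux.isShift_Sop, Stmt12Aux.Sop_pow_norm,
    Stmt12Aux.spectral_Sop, Stmt12Aux.analytic_phi,
    ⟨∑' k : ℕ, ‖phi12 k‖, Stmt12Aux.bounded_phi⟩,
    Stmt12Aux.not_summable_ksq, ?_, Stmt12Aux.not_multOp⟩
  exact Stmt12Aux.not_memℓp_Gamma _ (if_pos rfl) (fun n hn => if_neg hn)
end
end

section
/- Let S_λ be a bounded weighted shift on the directed tree 𝒯 with weights λ. If S_λ is bounded from below (i.e., there exists c > 0 with ‖S_λ f‖ ≥ c‖f‖ for all f), then representations with respect to the kernel of the adjoint are unique: if f = ∑_{n=0}^∞ S_λⁿ f_n = ∑_{n=0}^∞ S_λⁿ g_n with all f_n, g_n ∈ ker S_λ* and both series converging in ℓ²(V), then f_n = g_n for every n ∈ ℕ₀. -/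
open Filter Finset Classical

set_option linter.unusedVariables false
open scoped ComplexConjugate ENNReal

noncomputable section
attribute [local instance] Classical.propDecidable

section Aux
open Filter Finset
open scoped InnerProductSpace

variable {E : Type*} [NormedAddCommGroup E] [InnerProductSpace ℂ E] [CompleteSpace E]

lemma step_zero (S : E →L[ℂ] E) (h : ℕ → E)
    (hker : ∀ n, ContinuousLinearMap.adjoint S (h n) = 0)
    (hsum : Tendsto (fun N => ∑ n ∈ Finset.range N, (S ^ n) (h n)) atTop (nhds 0)) :
    h 0 = 0 := by
  have key : ∀ N : ℕ, ⟪h 0, ∑ n ∈ Finset.range (N + 1), (S ^ n) (h n)⟫_ℂ = ⟪h 0, h 0⟫_ℂ := by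
    intro N
    rw [inner_sum]
    rw [Finset.sum_eq_single 0]
    · simp
    · intro n hn hne
      obtain ⟨m, rfl⟩ := Nat.exists_eq_succ_of_ne_zero hne
      rw [pow_succ', ContinuousLinearMap.mul_apply,
        ← ContinuousLinearMap.adjoint_inner_left, hker 0, inner_zero_left]
    · intro hmem
      simp at hmem
  have h1 : Tendsto (fun N : ℕ => ⟪h 0, ∑ n ∈ Finset.range (N + 1), (S ^ n) (h n)⟫_ℂ)
      atTop (nhds ⟪h 0, (0 : E)⟫_ℂ) :=
    (Continuous.tendsto (continuous_const.inner continuous_id) _).comp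
      (hsum.comp (tendsto_add_atTop_nat 1))
  have := tendsto_nhds_unique (h1.congr (fun N => key N)) tendsto_const_nhds
  rw [inner_zero_right] at this
  exact inner_self_eq_zero.mp this.symm

lemma step_shift (S : E →L[ℂ] E) (c : ℝ) (hc : 0 < c)
    (hb : ∀ f : E, c * ‖f‖ ≤ ‖S f‖) (h : ℕ → E)
    (hker : ∀ n, ContinuousLinearMap.adjoint S (h n) = 0)
    (hsum : Tendsto (fun N => ∑ n ∈ Finset.range N, (S ^ n) (h n)) atTop (nhds 0)) :
    Tendsto (fun N => ∑ n ∈ Finset.range N, (S ^ n) (h (n + 1))) atTop (nhds 0) := by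
  have h0 := step_zero S h hker hsum
  have key : ∀ N : ℕ, ∑ n ∈ Finset.range (N + 1), (S ^ n) (h n)
      = S (∑ n ∈ Finset.range N, (S ^ n) (h (n + 1))) := by
    intro N
    rw [Finset.sum_range_succ', h0, map_zero, add_zero, map_sum]
    exact Finset.sum_congr rfl fun n _ => by
      rw [pow_succ', ContinuousLinearMap.mul_apply]
  have hS0 : Tendsto (fun N => ‖S (∑ n ∈ Finset.range N, (S ^ n) (h (n + 1)))‖)
      atTop (nhds 0) := by
    have := (hsum.comp (tendsto_add_atTop_nat 1)).norm
    simp only [norm_zero] at this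
    exact this.congr fun N => by simp only [Function.comp_apply, key N]
  rw [tendsto_zero_iff_norm_tendsto_zero]
  refine squeeze_zero (g := fun N => ‖S (∑ n ∈ Finset.range N, (S ^ n) (h (n + 1)))‖ / c)
    (fun N => norm_nonneg _) (fun N => ?_) ?_
  · rw [le_div_iff₀ hc, mul_comm]
    exact hb _
  · simpa using hS0.div_const c

lemma all_zero (S : E →L[ℂ] E) (c : ℝ) (hc : 0 < c)
    (hb : ∀ f : E, c * ‖f‖ ≤ ‖S f‖) :
    ∀ (n : ℕ) (h : ℕ → E), (∀ k, ContinuousLinearMap.adjoint S (h k) = 0) →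
    Tendsto (fun N => ∑ k ∈ Finset.range N, (S ^ k) (h k)) atTop (nhds 0) → h n = 0 := by
  intro n
  induction n with
  | zero => exact fun h hker hsum => step_zero S h hker hsum
  | succ n ih =>
    intro h hker hsum
    exact ih (fun k => h (k + 1)) (fun k => hker (k + 1)) (step_shift S c hc hb h hker hsum)

end Aux

variable {V : Type*}

/-- if the weighted shift `S_λ` (complex weights) is bounded from below,
then representations `f = ∑_{n=0}^∞ S_λⁿ f_n` with `f_n ∈ ker S_λ*` are unique. -/
theorem stmt13 [Countable V] [Infinite V] (T : DirTree V) (lam : V → ℂ)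
    (S : lp (fun _ : V => ℂ) 2 →L[ℂ] lp (fun _ : V => ℂ) 2)
    (hS : ∀ f : lp (fun _ : V => ℂ) 2, ∀ v : V,
      S f v = if v = T.root then 0 else lam v * f (T.par v))
    (hbelow : ∃ c : ℝ, 0 < c ∧ ∀ f : lp (fun _ : V => ℂ) 2, c * ‖f‖ ≤ ‖S f‖)
    (f : lp (fun _ : V => ℂ) 2) (F G : ℕ → lp (fun _ : V => ℂ) 2)
    (hF : ∀ n, ContinuousLinearMap.adjoint S (F n) = 0)
    (hG : ∀ n, ContinuousLinearMap.adjoint S (G n) = 0)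
    (hFsum : Filter.Tendsto (fun N => ∑ n ∈ Finset.range N, (S ^ n) (F n))
      Filter.atTop (nhds f))
    (hGsum : Filter.Tendsto (fun N => ∑ n ∈ Finset.range N, (S ^ n) (G n))
      Filter.atTop (nhds f)) :
    ∀ n : ℕ, F n = G n := by
  obtain ⟨c, hc, hb⟩ := hbelow
  intro n
  rw [← sub_eq_zero]
  refine all_zero S c hc hb n (fun k => F k - G k)
    (fun k => by rw [map_sub, hF k, hG k, sub_zero]) ?_
  have := hFsum.sub hGsum
  rw [sub_self] at this
  refine this.congr fun N => ?_
  rw [← Finset.sum_sub_distrib]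
  exact Finset.sum_congr rfl fun k _ => by rw [map_sub]
end
end

section
/- Assume in addition that S_λ is injective. Then the condition (i) ‖S_λ e_u‖ = ‖S_λ e_v‖ for all u, v ∈ V with |u| = |v| is equivalent to the condition (iii) ‖S_λⁿ e_u‖ = ‖S_λⁿ e_v‖ for every n ∈ ℕ and all u, v ∈ V with par(u) = par(v). -/
open Filter Finset Classical

set_option linter.unusedVariables false
open scoped ComplexConjugate ENNReal

noncomputable section
attribute [local instance] Classical.propDecidable

variable {V : Type*}

section Aux

variable {V : Type*}

lemma par_iterate_root (T : DirTree V) (n : ℕ) : T.par^[n] T.root = T.root := by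
  induction n with
  | zero => rfl
  | succ n ih => rw [Function.iterate_succ_apply', ih, T.par_root]

lemma depth_iterate (T : DirTree V) : ∀ (n : ℕ) (v : V), n ≤ T.depth v →
    T.depth (T.par^[n] v) + n = T.depth v := by
  intro n
  induction n with
  | zero => simp
  | succ n ih =>
    intro v hv
    have hvroot : v ≠ T.root := by
      intro h; rw [h] at hv; simp [(T.depth_eq_zero T.root).2 rfl] at hv
    have hdp : T.depth (T.par v) + 1 = T.depth v := T.depth_par v hvroot
    have hn : n ≤ T.depth (T.par v) := by omega
    have := ih (T.par v) hn
    rw [Function.iterate_succ_apply]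
    omega

lemma iterate_eq_of_ne_root (T : DirTree V) : ∀ (n : ℕ) (v w : V), T.par^[n] v = w →
    w ≠ T.root → n ≤ T.depth v ∧ T.depth v = T.depth w + n := by
  intro n v w h hw
  by_cases hle : n ≤ T.depth v
  · have := depth_iterate T n v hle
    rw [h] at this
    omega
  · exfalso
    have h1 : T.depth v ≤ n := le_of_not_ge hle
    have h2 : T.par^[T.depth v] v = T.root := by
      have := depth_iterate T (T.depth v) v le_rfl
      have h0 : T.depth (T.par^[T.depth v] v) = 0 := by omega
      exact (T.depth_eq_zero _).1 h0
    have : T.par^[n] v = T.root := by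
      have hnn : n = (n - T.depth v) + T.depth v := by omega
      rw [hnn, Function.iterate_add_apply, h2, par_iterate_root]
    exact hw (this ▸ h.symm)

/-- Coordinates of powers of the shift. -/
lemma coord (T : DirTree V) (lam : V → ℝ)
    (S : lp (fun _ : V => ℂ) 2 →L[ℂ] lp (fun _ : V => ℂ) 2) (hS : IsShift T lam S) :
    ∀ (n : ℕ) (f : lp (fun _ : V => ℂ) 2) (v : V),
      (S ^ n) f v = if n ≤ T.depth v then
        (∏ k ∈ Finset.range n, (lam (T.par^[k] v) : ℂ)) * f (T.par^[n] v) else 0 := by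
  intro n
  induction n with
  | zero => intro f v; simp
  | succ n ih =>
    intro f v
    rw [pow_succ, ContinuousLinearMap.mul_apply, ih (S f) v]
    by_cases h1 : n + 1 ≤ T.depth v
    · have hn : n ≤ T.depth v := by omega
      rw [if_pos hn, if_pos h1]
      rw [hS f (T.par^[n] v)]
      have hroot : T.par^[n] v ≠ T.root := by
        intro h
        have := depth_iterate T n v hn
        rw [h, (T.depth_eq_zero T.root).2 rfl] at this
        omega
      rw [if_neg hroot, Finset.prod_range_succ, ← Function.iterate_succ_apply' T.par n v]
      ring
    · rw [if_neg h1]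
      by_cases hn : n ≤ T.depth v
      · rw [if_pos hn]
        have hd : T.depth v = n := by omega
        have hroot : T.par^[n] v = T.root := by
          have := depth_iterate T n v hn
          exact (T.depth_eq_zero _).1 (by omega)
        rw [hS f (T.par^[n] v), if_pos hroot, mul_zero]
      · rw [if_neg hn]

open scoped ENNReal NNReal

/-- The squared ℓ²-norm, valued in `ℝ≥0∞`. -/
def E2 (f : lp (fun _ : V => ℂ) 2) : ℝ≥0∞ := ∑' v : V, (‖f v‖₊ : ℝ≥0∞) ^ 2

lemma E2_ne_top (f : lp (fun _ : V => ℂ) 2) : E2 f ≠ ⊤ := by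
  have hs : Summable fun v : V => ‖f v‖ ^ (2 : ℝ) := (lp.memℓp f).summable (by norm_num)
  have hs' : Summable fun v : V => (‖f v‖₊ ^ 2 : ℝ≥0) := by
    rw [← NNReal.summable_coe]
    convert hs using 2 with v
    push_cast
    rw [← Real.rpow_natCast ‖f v‖ 2]
    norm_num
  have := ENNReal.tsum_coe_ne_top_iff_summable.2 hs'
  simpa [E2] using this

lemma norm_sq_eq_E2 (f : lp (fun _ : V => ℂ) 2) : ‖f‖ ^ (2:ℕ) = (E2 f).toReal := by
  have h := lp.norm_rpow_eq_tsum (p := 2) (by norm_num) f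
  have h2 : ((2 : ℝ≥0∞)).toReal = (2 : ℝ) := by norm_num
  rw [h2] at h
  have h1 : ∀ x : ℝ, x ^ (2:ℝ) = x ^ (2:ℕ) := fun x => by
    rw [← Real.rpow_natCast x 2]; norm_num
  rw [E2, ENNReal.tsum_toReal_eq (fun v => by simp)]
  calc ‖f‖ ^ (2:ℕ) = ‖f‖ ^ (2:ℝ) := (h1 _).symm
    _ = ∑' v : V, ‖f v‖ ^ (2:ℝ) := h
    _ = ∑' v : V, (((‖f v‖₊ : ℝ≥0∞)) ^ 2).toReal := by
        apply tsum_congr; intro v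
        rw [h1 _]
        simp [ENNReal.toReal_pow]

lemma norm_eq_iff_E2 (f g : lp (fun _ : V => ℂ) 2) : ‖f‖ = ‖g‖ ↔ E2 f = E2 g := by
  constructor
  · intro h
    have : (E2 f).toReal = (E2 g).toReal := by
      rw [← norm_sq_eq_E2, ← norm_sq_eq_E2, h]
    exact (ENNReal.toReal_eq_toReal_iff' (E2_ne_top f) (E2_ne_top g)).1 this
  · intro h
    have h1 : ‖f‖ ^ (2:ℕ) = ‖g‖ ^ (2:ℕ) := by rw [norm_sq_eq_E2, norm_sq_eq_E2, h]
    calc ‖f‖ = Real.sqrt (‖f‖ ^ 2) := (Real.sqrt_sq (norm_nonneg f)).symm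
      _ = Real.sqrt (‖g‖ ^ 2) := by rw [h1]
      _ = ‖g‖ := Real.sqrt_sq (norm_nonneg g)

lemma E2_single (u : V) : E2 (lp.single 2 u (1:ℂ)) = 1 := by
  rw [E2, tsum_eq_single u]
  · rw [lp.single_apply_self (E := fun _ : V => ℂ) 2 u 1]; simp
  · intro v hv
    rw [lp.single_apply_ne (E := fun _ : V => ℂ) 2 u 1 hv]
    simp

end Aux

section Aux2

open scoped ENNReal NNReal

variable {V : Type*}

lemma tsum_group (g : V → V) (c : V → ℝ≥0∞) :
    ∑' v : V, c v = ∑' w : V, ∑' v : V, if g v = w then c v else 0 := by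
  conv_rhs => rw [ENNReal.tsum_comm]
  apply tsum_congr; intro v
  symm
  rw [tsum_eq_single (g v)]
  · rw [if_pos rfl]
  · intro w hw
    rw [if_neg (fun h => hw h.symm)]

/-- The key recursion for squared norms of shifted basis vectors. -/
lemma E2_succ (T : DirTree V) (lam : V → ℝ)
    (S : lp (fun _ : V => ℂ) 2 →L[ℂ] lp (fun _ : V => ℂ) 2) (hS : IsShift T lam S)
    (u : V) (n : ℕ) :
    E2 ((S ^ (n+1)) (lp.single 2 u (1:ℂ))) =
      ∑' w : V, if w ≠ T.root ∧ T.par w = u then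
        (‖lam w‖₊ : ℝ≥0∞) ^ 2 * E2 ((S ^ n) (lp.single 2 w (1:ℂ))) else 0 := by
  rw [E2, tsum_group (fun v => T.par^[n] v)]
  apply tsum_congr; intro w
  by_cases hw : w ≠ T.root ∧ T.par w = u
  · rw [if_pos hw, E2, ← ENNReal.tsum_mul_left]
    apply tsum_congr; intro v
    by_cases hv : T.par^[n] v = w
    · rw [if_pos hv]
      obtain ⟨hle, hdep⟩ := iterate_eq_of_ne_root T n v w hv hw.1
      have hdw : 1 ≤ T.depth w := by
        rcases Nat.eq_zero_or_pos (T.depth w) with h0 | h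
        · exact absurd ((T.depth_eq_zero w).1 h0) hw.1
        · exact h
      have hle1 : n + 1 ≤ T.depth v := by omega
      rw [coord T lam S hS (n+1) _ v, if_pos hle1, coord T lam S hS n _ v, if_pos hle]
      rw [Function.iterate_succ_apply' T.par n v, hv, hw.2]
      rw [lp.single_apply_self (E := fun _ : V => ℂ) 2 u 1,
        lp.single_apply_self (E := fun _ : V => ℂ) 2 w 1]
      rw [Finset.prod_range_succ, hv]
      rw [mul_one, mul_one, nnnorm_mul]
      push_cast
      rw [Complex.nnnorm_real]
      ring
    · rw [if_neg hv]
      rw [coord T lam S hS n _ v]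
      by_cases hle : n ≤ T.depth v
      · rw [if_pos hle, lp.single_apply_ne (E := fun _ : V => ℂ) 2 w 1 hv]
        simp
      · rw [if_neg hle]
        simp
  · rw [if_neg hw]
    have hzero : ∀ v : V,
        (if T.par^[n] v = w then (‖((S ^ (n+1)) (lp.single 2 u (1:ℂ)) : lp (fun _ : V => ℂ) 2) v‖₊ : ℝ≥0∞) ^ 2 else 0) = 0 := by
      intro v
      by_cases hv : T.par^[n] v = w
      · rw [if_pos hv, coord T lam S hS (n+1) _ v]
        by_cases hle1 : n + 1 ≤ T.depth v
        · rw [if_pos hle1]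
          have hle : n ≤ T.depth v := by omega
          have hdi := depth_iterate T n v hle
          have hwroot : w ≠ T.root := by
            intro h
            rw [h] at hv
            rw [hv, (T.depth_eq_zero T.root).2 rfl] at hdi
            omega
          have hpar : T.par w ≠ u := by
            intro h; exact hw ⟨hwroot, h⟩
          rw [Function.iterate_succ_apply' T.par n v, hv]
          rw [lp.single_apply_ne (E := fun _ : V => ℂ) 2 u 1 hpar]
          simp
        · rw [if_neg hle1]; simp
      · rw [if_neg hv]
    rw [tsum_congr hzero, tsum_zero]

lemma E2_one (T : DirTree V) (lam : V → ℝ)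
    (S : lp (fun _ : V => ℂ) 2 →L[ℂ] lp (fun _ : V => ℂ) 2) (hS : IsShift T lam S)
    (u : V) :
    E2 (S (lp.single 2 u (1:ℂ))) =
      ∑' w : V, if w ≠ T.root ∧ T.par w = u then (‖lam w‖₊ : ℝ≥0∞) ^ 2 else 0 := by
  have h := E2_succ T lam S hS u 0
  rw [pow_one] at h
  rw [h]
  apply tsum_congr; intro w
  by_cases hw : w ≠ T.root ∧ T.par w = u
  · rw [if_pos hw, if_pos hw, pow_zero, ContinuousLinearMap.one_apply, E2_single, mul_one]
  · rw [if_neg hw, if_neg hw]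

/-- Pulling a constant value out of the recursion. -/
lemma pullout (T : DirTree V) (lam : V → ℝ)
    (S : lp (fun _ : V => ℂ) 2 →L[ℂ] lp (fun _ : V => ℂ) 2) (hS : IsShift T lam S)
    (u : V) (n : ℕ) (C : ℝ≥0∞)
    (hC : ∀ w : V, w ≠ T.root → T.par w = u → E2 ((S ^ n) (lp.single 2 w (1:ℂ))) = C) :
    E2 ((S ^ (n+1)) (lp.single 2 u (1:ℂ))) = C * E2 (S (lp.single 2 u (1:ℂ))) := by
  rw [E2_succ T lam S hS u n, E2_one T lam S hS u, ← ENNReal.tsum_mul_left]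
  apply tsum_congr; intro w
  by_cases hw : w ≠ T.root ∧ T.par w = u
  · rw [if_pos hw, if_pos hw, hC w hw.1 hw.2]
    ring
  · rw [if_neg hw, if_neg hw, mul_zero]

lemma single_ne_zero' (u : V) : lp.single (E := fun _ : V => ℂ) 2 u (1:ℂ) ≠ 0 := by
  intro h
  have h1 := lp.single_apply_self (E := fun _ : V => ℂ) 2 u 1
  rw [h] at h1
  simp at h1

lemma norm_S_single_ne_zero (T : DirTree V) (lam : V → ℝ)
    (S : lp (fun _ : V => ℂ) 2 →L[ℂ] lp (fun _ : V => ℂ) 2)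
    (hinj : Function.Injective S) (u : V) :
    E2 (S (lp.single 2 u (1:ℂ))) ≠ 0 := by
  intro h
  have hn : ‖S (lp.single 2 u (1:ℂ))‖ ^ (2:ℕ) = 0 := by
    rw [norm_sq_eq_E2, h]; simp
  have hn2 : S (lp.single 2 u (1:ℂ)) = 0 := by
    have := pow_eq_zero_iff (n := 2) (by norm_num) |>.1 hn
    exact norm_eq_zero.1 this
  have : lp.single 2 u (1:ℂ) = 0 := hinj (by rw [hn2, map_zero])
  exact single_ne_zero' u this

lemma exists_child (T : DirTree V) (lam : V → ℝ)
    (S : lp (fun _ : V => ℂ) 2 →L[ℂ] lp (fun _ : V => ℂ) 2) (hS : IsShift T lam S)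
    (hinj : Function.Injective S) (u : V) :
    ∃ w : V, w ≠ T.root ∧ T.par w = u := by
  by_contra hno
  push_neg at hno
  apply norm_S_single_ne_zero T lam S hinj u
  rw [E2_one T lam S hS u]
  have : ∀ w : V, (if w ≠ T.root ∧ T.par w = u then (‖lam w‖₊ : ℝ≥0∞) ^ 2 else 0) = 0 := by
    intro w
    rw [if_neg (fun hw => hno w hw.1 hw.2)]
  rw [tsum_congr this, tsum_zero]

end Aux2

/-- Lemma, (i) ⇔ (iii) under injectivity: if `S_λ` is injective, then
`S_λ` is balanced iff it is locally power balanced: `‖S_λⁿ e_u‖ = ‖S_λⁿ e_v‖` for every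
`n ∈ ℕ` and all `u, v ∈ V°` with `par u = par v`. -/
theorem stmt15 [Countable V] [Infinite V] (T : DirTree V) (lam : V → ℝ)
    (hlam : ∀ v, v ≠ T.root → 0 < lam v)
    (S : lp (fun _ : V => ℂ) 2 →L[ℂ] lp (fun _ : V => ℂ) 2) (hS : IsShift T lam S)
    (hinj : Function.Injective S) :
    (∀ u v : V, T.depth u = T.depth v →
        ‖S (lp.single 2 u (1:ℂ))‖ = ‖S (lp.single 2 v (1:ℂ))‖) ↔
      (∀ n : ℕ, 1 ≤ n → ∀ u v : V, u ≠ T.root → v ≠ T.root → T.par u = T.par v →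
        ‖(S ^ n) (lp.single 2 u (1:ℂ))‖ = ‖(S ^ n) (lp.single 2 v (1:ℂ))‖) := by
  constructor
  · -- (i) → (iii)
    intro hi
    have Q : ∀ n : ℕ, ∀ u v : V, T.depth u = T.depth v →
        E2 ((S ^ n) (lp.single 2 u (1:ℂ))) = E2 ((S ^ n) (lp.single 2 v (1:ℂ))) := by
      intro n
      induction n with
      | zero =>
        intro u v _
        rw [pow_zero, ContinuousLinearMap.one_apply, ContinuousLinearMap.one_apply,
          E2_single, E2_single]
      | succ n ih =>
        intro u v huv
        obtain ⟨w0, hw0r, hw0p⟩ := exists_child T lam S hS hinj u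
        have hd0 : T.depth w0 = T.depth u + 1 := by
          have := T.depth_par w0 hw0r; rw [hw0p] at this; omega
        rw [pullout T lam S hS u n (E2 ((S ^ n) (lp.single 2 w0 (1:ℂ))))
          (fun w hwr hwp => by
            apply ih
            have := T.depth_par w hwr; rw [hwp] at this; omega)]
        rw [pullout T lam S hS v n (E2 ((S ^ n) (lp.single 2 w0 (1:ℂ))))
          (fun w hwr hwp => by
            apply ih
            have := T.depth_par w hwr; rw [hwp] at this; omega)]
        congr 1
        exact (norm_eq_iff_E2 _ _).1 (hi u v huv)
    intro n hn u v hu hv hpar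
    apply (norm_eq_iff_E2 _ _).2
    apply Q n
    have h1 := T.depth_par u hu
    have h2 := T.depth_par v hv
    rw [hpar] at h1
    omega
  · -- (iii) → (i)
    intro hiii
    have P : ∀ m : ℕ, ∀ n : ℕ, ∀ u v : V, T.depth u = m → T.depth v = m →
        E2 ((S ^ n) (lp.single 2 u (1:ℂ))) = E2 ((S ^ n) (lp.single 2 v (1:ℂ))) := by
      intro m
      induction m with
      | zero =>
        intro n u v hu hv
        rw [(T.depth_eq_zero u).1 hu, (T.depth_eq_zero v).1 hv]
      | succ m ih =>
        intro n u v hu hv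
        have hur : u ≠ T.root := by
          intro h; rw [h, (T.depth_eq_zero T.root).2 rfl] at hu; omega
        have hvr : v ≠ T.root := by
          intro h; rw [h, (T.depth_eq_zero T.root).2 rfl] at hv; omega
        cases n with
        | zero =>
          rw [pow_zero, ContinuousLinearMap.one_apply, ContinuousLinearMap.one_apply,
            E2_single, E2_single]
        | succ n =>
          have hdu : T.depth (T.par u) = m := by have := T.depth_par u hur; omega
          have hdv : T.depth (T.par v) = m := by have := T.depth_par v hvr; omega
          have hCu : ∀ w : V, w ≠ T.root → T.par w = T.par u →
              E2 ((S ^ (n+1)) (lp.single 2 w (1:ℂ))) = E2 ((S ^ (n+1)) (lp.single 2 u (1:ℂ))) :=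
            fun w hwr hwp => (norm_eq_iff_E2 _ _).1 (hiii (n+1) (by omega) w u hwr hur hwp)
          have hCv : ∀ w : V, w ≠ T.root → T.par w = T.par v →
              E2 ((S ^ (n+1)) (lp.single 2 w (1:ℂ))) = E2 ((S ^ (n+1)) (lp.single 2 v (1:ℂ))) :=
            fun w hwr hwp => (norm_eq_iff_E2 _ _).1 (hiii (n+1) (by omega) w v hwr hvr hwp)
          have e1 := pullout T lam S hS (T.par u) (n+1) _ hCu
          have e2 := pullout T lam S hS (T.par v) (n+1) _ hCv
          have h4 : E2 (S (lp.single 2 (T.par u) (1:ℂ))) = E2 (S (lp.single 2 (T.par v) (1:ℂ))) := by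
            have := ih 1 (T.par u) (T.par v) hdu hdv
            rwa [pow_one] at this
          have hne : E2 (S (lp.single 2 (T.par v) (1:ℂ))) ≠ 0 :=
            norm_S_single_ne_zero T lam S hinj _
          have htop : E2 (S (lp.single 2 (T.par v) (1:ℂ))) ≠ ⊤ := E2_ne_top _
          have key : E2 ((S ^ (n+1)) (lp.single 2 u (1:ℂ))) * E2 (S (lp.single 2 (T.par u) (1:ℂ)))
              = E2 ((S ^ (n+1)) (lp.single 2 v (1:ℂ))) * E2 (S (lp.single 2 (T.par v) (1:ℂ))) := by
            rw [← e1, ← e2]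
            exact ih ((n+1)+1) (T.par u) (T.par v) hdu hdv
          rw [h4] at key
          exact (ENNReal.mul_left_inj hne htop).1 key
    intro u v huv
    apply (norm_eq_iff_E2 _ _).2
    have := P (T.depth u) 1 u v rfl huv.symm
    rwa [pow_one] at this
end
end

section
/- The Hilbert space ℓ²(V) decomposes as the orthogonal sum ℓ²(V) = ker S_λ* ⊕ ⋁_{n=1}^∞ S_λⁿ(ker S_λ*), where ⋁ denotes the closed linear span. -/
open Filter Finset Classical

set_option linter.unusedVariables false
open scoped ComplexConjugate ENNReal

set_option maxHeartbeats 1000000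
set_option synthInstance.maxHeartbeats 400000

noncomputable section
attribute [local instance] Classical.propDecidable

variable {V : Type*}

section Aux

variable {V : Type*}

private lemma coord_eq (x : lp (fun _ : V => ℂ) 2) (w : V) :
    (inner ℂ (lp.single 2 w (1:ℂ)) x : ℂ) = x w := by
  rw [lp.inner_single_left]
  simp [RCLike.inner_apply]

private lemma adj_coord (S : lp (fun _ : V => ℂ) 2 →L[ℂ] lp (fun _ : V => ℂ) 2)
    (y : lp (fun _ : V => ℂ) 2) (x : V) :
    (ContinuousLinearMap.adjoint S y) x = (inner ℂ (S (lp.single 2 x (1:ℂ))) y : ℂ) := by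
  rw [← coord_eq, ContinuousLinearMap.adjoint_inner_right]

private lemma root_mem_ker (T : DirTree V) (lam : V → ℝ)
    (S : lp (fun _ : V => ℂ) 2 →L[ℂ] lp (fun _ : V => ℂ) 2) (hS : IsShift T lam S) :
    (lp.single 2 T.root (1:ℂ) : lp (fun _ : V => ℂ) 2) ∈ LinearMap.ker ((ContinuousLinearMap.adjoint S : lp (fun _ : V => ℂ) 2 →ₗ[ℂ] lp (fun _ : V => ℂ) 2)) := by
  rw [LinearMap.mem_ker]
  apply lp.ext
  funext x
  have h0 : (S (lp.single 2 x (1:ℂ))) T.root = 0 := by rw [hS]; simp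
  rw [ContinuousLinearMap.coe_coe, adj_coord, lp.inner_single_right]
  simp [RCLike.inner_apply, h0]

end Aux
section Aux3
variable {V : Type*}

private lemma singles_mem (T : DirTree V) (lam : V → ℝ)
    (hlam : ∀ v, v ≠ T.root → 0 < lam v)
    (S : lp (fun _ : V => ℂ) 2 →L[ℂ] lp (fun _ : V => ℂ) 2) (hS : IsShift T lam S)
    (v : V) :
    (lp.single 2 v (1:ℂ) : lp (fun _ : V => ℂ) 2) ∈ (⨆ n : ℕ, Submodule.map ((S ^ n : lp (fun _ : V => ℂ) 2 →ₗ[ℂ] lp (fun _ : V => ℂ) 2))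
        (LinearMap.ker ((ContinuousLinearMap.adjoint S : lp (fun _ : V => ℂ) 2 →ₗ[ℂ] lp (fun _ : V => ℂ) 2)))).topologicalClosure := by
  set K := LinearMap.ker ((ContinuousLinearMap.adjoint S : lp (fun _ : V => ℂ) 2 →ₗ[ℂ] lp (fun _ : V => ℂ) 2)) with hK
  set E := (⨆ n : ℕ, Submodule.map ((S ^ n : lp (fun _ : V => ℂ) 2 →ₗ[ℂ] lp (fun _ : V => ℂ) 2)) K).topologicalClosure with hE
  have hKE : K ≤ E := by
    intro x hx
    exact Submodule.le_topologicalClosure _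
      (Submodule.mem_iSup_of_mem 0 ⟨x, hx, by simp⟩)
  have hSE : ∀ x ∈ E, S x ∈ E := by
    intro x hx
    have key : (⨆ n : ℕ, Submodule.map ((S ^ n : lp (fun _ : V => ℂ) 2 →ₗ[ℂ] lp (fun _ : V => ℂ) 2)) K) ≤ Submodule.comap (S : lp (fun _ : V => ℂ) 2 →ₗ[ℂ] lp (fun _ : V => ℂ) 2) E := by
      refine iSup_le fun n => ?_
      rintro y ⟨z, hz, rfl⟩
      have h1 : ((S : lp (fun _ : V => ℂ) 2 →ₗ[ℂ] lp (fun _ : V => ℂ) 2) ^ (n+1)) z = S (((S : lp (fun _ : V => ℂ) 2 →ₗ[ℂ] lp (fun _ : V => ℂ) 2) ^ n) z) := by rw [pow_succ']; rfl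
      show S (((S : lp (fun _ : V => ℂ) 2 →ₗ[ℂ] lp (fun _ : V => ℂ) 2) ^ n) z) ∈ E
      rw [← h1]
      exact Submodule.le_topologicalClosure _
        (Submodule.mem_iSup_of_mem (n+1) ⟨z, hz, rfl⟩)
    have hcl : IsClosed ((Submodule.comap (S : lp (fun _ : V => ℂ) 2 →ₗ[ℂ] lp (fun _ : V => ℂ) 2) E : Submodule ℂ _) : Set (lp (fun _ : V => ℂ) 2)) :=
      (Submodule.isClosed_topologicalClosure _).preimage S.continuous
    exact Submodule.topologicalClosure_minimal _ key hcl hx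
  suffices h : ∀ n : ℕ, ∀ w : V, T.depth w = n → lp.single 2 w (1:ℂ) ∈ E from
    h (T.depth v) v rfl
  intro n
  induction n with
  | zero =>
    intro w hw
    rw [(T.depth_eq_zero w).mp hw]
    exact hKE (root_mem_ker T lam S hS)
  | succ n ih =>
    intro w hw
    have hwroot : w ≠ T.root := by
      intro h
      rw [h, (T.depth_eq_zero T.root).mpr rfl] at hw
      exact Nat.succ_ne_zero n hw.symm
    set u := T.par w with hu
    have hdu : T.depth u = n := by
      have h2 := T.depth_par w hwroot
      rw [← hu] at h2
      omega
    have huE := ih u hdu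
    set φ := S (lp.single 2 u (1:ℂ)) with hφ
    have hφw : φ w = (lam w : ℂ) := by
      rw [hφ, hS, if_neg hwroot, ← hu, lp.single_apply_self, mul_one]
    have hφne : φ ≠ 0 := by
      intro h0
      have h1 : φ w = 0 := by rw [h0]; simp
      rw [hφw] at h1
      exact (hlam w hwroot).ne' (Complex.ofReal_eq_zero.mp h1)
    set c : ℂ := inner ℂ φ φ with hc
    have hcne : c ≠ 0 := by
      rw [hc, ne_eq, inner_self_eq_zero]
      exact hφne
    have hdisj : ∀ x : V, x ≠ u → (inner ℂ (S (lp.single 2 x (1:ℂ))) φ : ℂ) = 0 := by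
      intro x hx
      rw [lp.inner_eq_tsum]
      have hterm : ∀ i : V, (inner ℂ ((S (lp.single 2 x (1:ℂ))) i) (φ i) : ℂ) = 0 := by
        intro i
        by_cases hi : i = T.root
        · have h2 : (S (lp.single 2 x (1:ℂ))) i = 0 := by rw [hS, if_pos hi]
          rw [h2, inner_zero_left]
        · by_cases hpi : T.par i = u
          · have h2 : (S (lp.single 2 x (1:ℂ))) i = 0 := by
              rw [hS, if_neg hi, hpi,
                lp.single_apply_ne 2 x 1 (fun h => hx h.symm), mul_zero]
            rw [h2, inner_zero_left]
          · have h2 : φ i = 0 := by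
              rw [hφ, hS, if_neg hi, lp.single_apply_ne 2 u 1 hpi, mul_zero]
            rw [h2, inner_zero_right]
      simp only [hterm, tsum_zero]
    have hadjφ : ContinuousLinearMap.adjoint S φ = c • lp.single 2 u (1:ℂ) := by
      apply lp.ext
      funext x
      rw [adj_coord]
      by_cases hx : x = u
      · rw [hx, ← hφ, ← hc]
        simp [lp.single_apply_self]
      · rw [hdisj x hx]
        simp [lp.single_apply_ne 2 u 1 hx, Pi.single_eq_of_ne hx]
    have hadjw : ContinuousLinearMap.adjoint S (lp.single 2 w (1:ℂ))
        = (lam w : ℂ) • lp.single 2 u (1:ℂ) := by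
      apply lp.ext
      funext x
      rw [adj_coord, lp.inner_single_right]
      have hSx : (S (lp.single 2 x (1:ℂ))) w = (lam w : ℂ) * (lp.single 2 x (1:ℂ) : lp (fun _ : V => ℂ) 2) u := by
        rw [hS, if_neg hwroot, ← hu]
      change _ = (lam w : ℂ) * ((lp.single 2 u (1:ℂ) : lp (fun _ : V => ℂ) 2) x)
      by_cases hx : x = u
      · rw [hx] at hSx ⊢
        rw [hSx, lp.single_apply_self]
        simp [RCLike.inner_apply, lp.single_apply_self, lp.coeFn_smul, lp.coeFn_single]
      · rw [hSx, lp.single_apply_ne 2 x 1 (fun h => hx h.symm)]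
        simp [lp.single_apply_ne 2 u 1 hx, lp.coeFn_smul, lp.coeFn_single, Pi.single_eq_of_ne hx]
    have hgK : lp.single 2 w (1:ℂ) - ((lam w : ℂ) / c) • φ ∈ K := by
      rw [hK, LinearMap.mem_ker, map_sub, map_smul, ContinuousLinearMap.coe_coe, hadjφ, hadjw, smul_smul,
        div_mul_cancel₀ _ hcne, sub_self]
    have hmem := E.add_mem (hKE hgK) (E.smul_mem ((lam w : ℂ) / c) (hSE _ huE))
    simpa [hφ] using hmem

end Aux3
section Aux4
variable {V : Type*}

private lemma core_perp (T : DirTree V) (lam : V → ℝ)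
    (hlam : ∀ v, v ≠ T.root → 0 < lam v)
    (S : lp (fun _ : V => ℂ) 2 →L[ℂ] lp (fun _ : V => ℂ) 2) (hS : IsShift T lam S)
    (f : lp (fun _ : V => ℂ) 2)
    (hfK : f ∈ (LinearMap.ker ((ContinuousLinearMap.adjoint S : lp (fun _ : V => ℂ) 2 →ₗ[ℂ] lp (fun _ : V => ℂ) 2)))ᗮ)
    (hfC : f ∈ ((⨆ n : ℕ, Submodule.map ((S ^ (n + 1) : lp (fun _ : V => ℂ) 2 →ₗ[ℂ] lp (fun _ : V => ℂ) 2))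
        (LinearMap.ker ((ContinuousLinearMap.adjoint S : lp (fun _ : V => ℂ) 2 →ₗ[ℂ] lp (fun _ : V => ℂ) 2)))).topologicalClosure)ᗮ) :
    f = 0 := by
  set K := LinearMap.ker ((ContinuousLinearMap.adjoint S : lp (fun _ : V => ℂ) 2 →ₗ[ℂ] lp (fun _ : V => ℂ) 2)) with hK
  have hEf : (⨆ n : ℕ, Submodule.map ((S ^ n : lp (fun _ : V => ℂ) 2 →ₗ[ℂ] lp (fun _ : V => ℂ) 2)) K).topologicalClosure ≤ (ℂ ∙ f)ᗮ := by
    refine Submodule.topologicalClosure_minimal _ ?_ (Submodule.isClosed_orthogonal _)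
    refine iSup_le fun n => ?_
    rintro y ⟨z, hz, rfl⟩
    rw [Submodule.mem_orthogonal_singleton_iff_inner_left]
    cases n with
    | zero =>
      have h0 : ((S : lp (fun _ : V => ℂ) 2 →ₗ[ℂ] lp (fun _ : V => ℂ) 2) ^ 0) z = z := by rw [pow_zero]; rfl
      rw [h0]
      exact (Submodule.mem_orthogonal K f).mp hfK z hz
    | succ m =>
      refine (Submodule.mem_orthogonal _ f).mp hfC _ ?_
      exact Submodule.le_topologicalClosure _ (Submodule.mem_iSup_of_mem m ⟨z, hz, rfl⟩)
  apply lp.ext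
  funext w
  have h1 := hEf (singles_mem T lam hlam S hS w)
  rw [Submodule.mem_orthogonal_singleton_iff_inner_right, lp.inner_single_right] at h1
  have h2 : (starRingEnd ℂ) (f w) = 0 := by simpa [RCLike.inner_apply] using h1
  have h3 : f w = 0 := by simpa using congrArg (starRingEnd ℂ) h2
  simpa using h3

end Aux4
/-- Wold-type decomposition, Theorem (i):
`ℓ²(V) = ker S_λ* ⊕ ⋁_{n=1}^∞ S_λⁿ(ker S_λ*)`, an orthogonal decomposition. -/
theorem stmt16 [Countable V] [Infinite V] (T : DirTree V) (lam : V → ℝ)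
    (hlam : ∀ v, v ≠ T.root → 0 < lam v)
    (S : lp (fun _ : V => ℂ) 2 →L[ℂ] lp (fun _ : V => ℂ) 2) (hS : IsShift T lam S) :
    (∀ g ∈ LinearMap.ker ((ContinuousLinearMap.adjoint S : lp (fun _ : V => ℂ) 2 →ₗ[ℂ] lp (fun _ : V => ℂ) 2)),
      ∀ h ∈ (⨆ n : ℕ, Submodule.map ((S ^ (n + 1) : lp (fun _ : V => ℂ) 2 →ₗ[ℂ] lp (fun _ : V => ℂ) 2))
          (LinearMap.ker ((ContinuousLinearMap.adjoint S : lp (fun _ : V => ℂ) 2 →ₗ[ℂ] lp (fun _ : V => ℂ) 2)))).topologicalClosure,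
        (inner ℂ g h : ℂ) = 0) ∧
    LinearMap.ker ((ContinuousLinearMap.adjoint S : lp (fun _ : V => ℂ) 2 →ₗ[ℂ] lp (fun _ : V => ℂ) 2)) ⊔
      (⨆ n : ℕ, Submodule.map ((S ^ (n + 1) : lp (fun _ : V => ℂ) 2 →ₗ[ℂ] lp (fun _ : V => ℂ) 2))
          (LinearMap.ker ((ContinuousLinearMap.adjoint S : lp (fun _ : V => ℂ) 2 →ₗ[ℂ] lp (fun _ : V => ℂ) 2)))).topologicalClosure = ⊤ := by

  classical
  set K := LinearMap.ker ((ContinuousLinearMap.adjoint S : lp (fun _ : V => ℂ) 2 →ₗ[ℂ] lp (fun _ : V => ℂ) 2)) with hK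
  set C := (⨆ n : ℕ, Submodule.map ((S ^ (n + 1) : lp (fun _ : V => ℂ) 2 →ₗ[ℂ] lp (fun _ : V => ℂ) 2)) K).topologicalClosure with hC
  have part1 : C ≤ Kᗮ := by
    refine Submodule.topologicalClosure_minimal _ ?_ (Submodule.isClosed_orthogonal _)
    refine iSup_le fun n => ?_
    rintro y ⟨z, hz, rfl⟩
    rw [Submodule.mem_orthogonal]
    intro g hg
    have h1 : ((S : lp (fun _ : V => ℂ) 2 →ₗ[ℂ] lp (fun _ : V => ℂ) 2) ^ (n+1)) z = S (((S : lp (fun _ : V => ℂ) 2 →ₗ[ℂ] lp (fun _ : V => ℂ) 2) ^ n) z) := by rw [pow_succ']; rfl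
    rw [h1, ← ContinuousLinearMap.adjoint_inner_left,
      (show ContinuousLinearMap.adjoint S g = 0 from LinearMap.mem_ker.mp hg), inner_zero_left]
  constructor
  · intro g hg h hh
    exact (Submodule.mem_orthogonal K h).mp (part1 hh) g hg
  · haveI hCc : CompleteSpace C := (Submodule.isClosed_topologicalClosure _).completeSpace_coe
    haveI hKc : CompleteSpace K := (ContinuousLinearMap.isClosed_ker _).completeSpace_coe
    have hKCperp : K ≤ Cᗮ := by
      intro g hg
      rw [Submodule.mem_orthogonal']
      intro h hh
      exact (Submodule.mem_orthogonal K h).mp (part1 hh) g hg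
    have hCK : Cᗮ ≤ K := by
      intro x hx
      obtain ⟨y, hy, z, hz, hyz⟩ := K.exists_add_mem_mem_orthogonal x
      have hzx : z = x - y := by rw [hyz]; abel
      have hzC : z ∈ Cᗮ := by
        rw [hzx]
        exact Submodule.sub_mem _ hx (hKCperp hy)
      have hz0 : z = 0 := core_perp T lam hlam S hS z hz hzC
      rw [hyz, hz0, add_zero]
      exact hy
    have htop := Submodule.sup_orthogonal_of_hasOrthogonalProjection (K := C)
    rw [eq_top_iff, ← htop]
    exact sup_le le_sup_right (hCK.trans le_sup_left)
end
end

section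
/- If S_λ is locally power balanced, i.e., ‖S_λⁿ e_u‖ = ‖S_λⁿ e_v‖ for every n ∈ ℕ and all u, v ∈ V with par(u) = par(v), then the subspaces S_λⁿ(ker S_λ*) and S_λᵐ(ker S_λ*) are mutually orthogonal for all n, m ∈ ℕ₀ with n ≠ m. -/
open Filter Finset Classical

set_option linter.unusedVariables false
open scoped ComplexConjugate ENNReal

noncomputable section
attribute [local instance] Classical.propDecidable

variable {V : Type*}

section Aux

def cfun (S : lp (fun _ : V => ℂ) 2 →L[ℂ] lp (fun _ : V => ℂ) 2) (m : ℕ) (u : V) : ℝ :=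
  ‖(S ^ m) (lp.single 2 u (1:ℂ))‖ ^ 2

lemma norm_single_one (u : V) : ‖(lp.single 2 u (1:ℂ) : lp (fun _ : V => ℂ) 2)‖ = 1 := by
  have h : (0:ℝ≥0∞) < 2 := by norm_num
  have := lp.norm_single (E := fun _ : V => ℂ) (p := 2) h u (1:ℂ)
  simpa using this

lemma cfun_nonneg (S : lp (fun _ : V => ℂ) 2 →L[ℂ] lp (fun _ : V => ℂ) 2) (m : ℕ) (u : V) :
    0 ≤ cfun S m u := sq_nonneg _

lemma cfun_le (S : lp (fun _ : V => ℂ) 2 →L[ℂ] lp (fun _ : V => ℂ) 2) (m : ℕ) (u : V) :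
    cfun S m u ≤ ‖S ^ m‖ ^ 2 := by
  have h1 : ‖(S ^ m) (lp.single 2 u (1:ℂ))‖ ≤ ‖S ^ m‖ := by
    have := (S ^ m).le_opNorm (lp.single 2 u (1:ℂ))
    rwa [norm_single_one, mul_one] at this
  exact pow_le_pow_left₀ (norm_nonneg _) h1 2

variable (T : DirTree V) (lam : V → ℝ)
  (S : lp (fun _ : V => ℂ) 2 →L[ℂ] lp (fun _ : V => ℂ) 2)

lemma shift_root (hS : IsShift T lam S) (x : lp (fun _ : V => ℂ) 2) :
    (S x) T.root = 0 := by
  rw [hS x T.root, if_pos rfl]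

lemma pow_shift_succ (k : ℕ) (x : lp (fun _ : V => ℂ) 2) :
    (S ^ (k+1)) x = S ((S ^ k) x) := by
  rw [pow_succ', ContinuousLinearMap.mul_apply]

lemma pow_shift_root (hS : IsShift T lam S) (k : ℕ) (x : lp (fun _ : V => ℂ) 2) :
    ((S ^ (k+1)) x) T.root = 0 := by
  rw [pow_shift_succ]
  exact shift_root T lam S hS _

end Aux

section Main

variable (T : DirTree V) (lam : V → ℝ)
  (S : lp (fun _ : V => ℂ) 2 →L[ℂ] lp (fun _ : V => ℂ) 2)

def rfun (m : ℕ) (v : V) : ℝ :=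
  if v = T.root then 0 else cfun S m v * lam v ^ 2

lemma fiber_sum (hS : IsShift T lam S) (m : ℕ)
    (ih : ∀ a b : lp (fun _ : V => ℂ) 2,
      (inner ℂ ((S ^ m) a) ((S ^ m) b) : ℂ)
        = ∑' u : V, ((cfun S m u : ℝ) : ℂ) * (conj (a u) * b u)) (w : V) :
    (∑' v : (T.par ⁻¹' {w} : Set V), ((rfun T lam S m (v : V) : ℝ) : ℂ))
      = ((cfun S (m+1) w : ℝ) : ℂ) := by
  have h0 : ((cfun S (m+1) w : ℝ) : ℂ)
      = inner ℂ ((S ^ (m+1)) (lp.single 2 w (1:ℂ))) ((S ^ (m+1)) (lp.single 2 w (1:ℂ))) := by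
    rw [inner_self_eq_norm_sq_to_K]
    have : cfun S (m+1) w = ‖(S ^ (m+1)) (lp.single 2 w (1:ℂ))‖ ^ 2 := rfl
    rw [this]
    norm_cast
  have h1 : (inner ℂ ((S ^ (m+1)) (lp.single 2 w (1:ℂ))) ((S ^ (m+1)) (lp.single 2 w (1:ℂ))) : ℂ)
      = ∑' v : V, ((cfun S m v : ℝ) : ℂ)
          * (conj ((S (lp.single 2 w (1:ℂ))) v) * (S (lp.single 2 w (1:ℂ))) v) := by
    rw [pow_succ]
    simp only [ContinuousLinearMap.mul_apply]
    exact ih _ _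
  have h2 : ∀ v : V, ((cfun S m v : ℝ) : ℂ)
        * (conj ((S (lp.single 2 w (1:ℂ))) v) * (S (lp.single 2 w (1:ℂ))) v)
      = Set.indicator (T.par ⁻¹' {w}) (fun v => ((rfun T lam S m v : ℝ) : ℂ)) v := by
    intro v
    rw [hS (lp.single 2 w (1:ℂ)) v, Set.indicator_apply]
    by_cases hv : v = T.root
    · rw [if_pos hv]
      by_cases hw : v ∈ T.par ⁻¹' {w}
      · rw [if_pos hw]
        simp [rfun, hv]
      · rw [if_neg hw]
        simp
    · rw [if_neg hv]
      by_cases hw : T.par v = w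
      · subst hw
        have hmem : v ∈ T.par ⁻¹' {T.par v} := by simp
        rw [if_pos hmem, lp.single_apply_self]
        simp only [rfun, if_neg hv]
        rw [map_mul, map_one, Complex.conj_ofReal]
        push_cast
        ring
      · have hmem : v ∉ T.par ⁻¹' {w} := by simp [hw]
        rw [if_neg hmem, lp.single_apply_ne (E := fun _ : V => ℂ) 2 w (1:ℂ) hw]
        simp
  rw [tsum_subtype (T.par ⁻¹' {w}) (fun v => ((rfun T lam S m v : ℝ) : ℂ))]
  rw [← tsum_congr h2, ← h1, ← h0]

lemma L1 (hS : IsShift T lam S) :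
    ∀ m : ℕ, ∀ a b : lp (fun _ : V => ℂ) 2,
      (inner ℂ ((S ^ m) a) ((S ^ m) b) : ℂ)
        = ∑' u : V, ((cfun S m u : ℝ) : ℂ) * (conj (a u) * b u) := by
  intro m
  induction m with
  | zero =>
      intro a b
      rw [pow_zero]
      simp only [ContinuousLinearMap.one_apply]
      rw [lp.inner_eq_tsum]
      refine tsum_congr fun u => ?_
      rw [RCLike.inner_apply']
      have hc : cfun S 0 u = 1 := by
        have : cfun S 0 u = ‖(S ^ 0) (lp.single 2 u (1:ℂ))‖ ^ 2 := rfl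
        rw [this, pow_zero]
        simp [norm_single_one]
      rw [hc]
      push_cast
      ring
  | succ m ih =>
      intro a b
      have h1 : (inner ℂ ((S ^ (m+1)) a) ((S ^ (m+1)) b) : ℂ)
          = ∑' v : V, ((cfun S m v : ℝ) : ℂ) * (conj ((S a) v) * (S b) v) := by
        rw [pow_succ]
        simp only [ContinuousLinearMap.mul_apply]
        exact ih _ _
      have hF : ∀ v : V, ((cfun S m v : ℝ) : ℂ) * (conj ((S a) v) * (S b) v)
          = ((rfun T lam S m v : ℝ) : ℂ) * (conj (a (T.par v)) * b (T.par v)) := by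
        intro v
        by_cases hv : v = T.root
        · rw [hS a v, if_pos hv]
          simp [rfun, hv]
        · rw [hS a v, hS b v, if_neg hv, if_neg hv]
          simp only [rfun, if_neg hv]
          rw [map_mul, Complex.conj_ofReal]
          push_cast
          ring
      have hs0 : Summable fun v : V => ((cfun S m v : ℝ) : ℂ) * (conj ((S a) v) * (S b) v) := by
        have hinner : Summable fun v : V => (conj ((S a) v) * (S b) v) := by
          have := lp.summable_inner (𝕜 := ℂ) (S a) (S b)
          simp only [RCLike.inner_apply] at this
          exact this.congr fun v => mul_comm _ _
        have hnorm : Summable fun v : V => ‖conj ((S a) v) * (S b) v‖ :=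
          summable_norm_iff.mpr hinner
        refine Summable.of_norm_bounded (hnorm.mul_left (‖S ^ m‖ ^ 2)) fun v => ?_
        rw [norm_mul]
        have hc : ‖((cfun S m v : ℝ) : ℂ)‖ = cfun S m v := by
          rw [Complex.norm_real]
          exact abs_of_nonneg (cfun_nonneg S m v)
        rw [hc]
        exact mul_le_mul_of_nonneg_right (cfun_le S m v) (norm_nonneg _)
      have hG : Summable fun v : V =>
          ((rfun T lam S m v : ℝ) : ℂ) * (conj (a (T.par v)) * b (T.par v)) := hs0.congr hF
      have h3 := (hG.hasSum.tsum_fiberwise T.par).tsum_eq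
      have h4 : ∀ w : V,
          (∑' v : (T.par ⁻¹' {w} : Set V),
            ((rfun T lam S m (v : V) : ℝ) : ℂ) * (conj (a (T.par (v : V))) * b (T.par (v : V))))
          = ((cfun S (m+1) w : ℝ) : ℂ) * (conj (a w) * b w) := by
        intro w
        have e0 : ∀ v : (T.par ⁻¹' {w} : Set V),
            ((rfun T lam S m (v : V) : ℝ) : ℂ) * (conj (a (T.par (v : V))) * b (T.par (v : V)))
              = ((rfun T lam S m (v : V) : ℝ) : ℂ) * (conj (a w) * b w) := by
          intro v
          have : T.par (v : V) = w := v.2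
          rw [this]
        rw [tsum_congr e0, tsum_mul_right, fiber_sum T lam S hS m ih w]
      rw [h1, tsum_congr hF, ← h3, tsum_congr h4]

end Main

section Main2

variable (T : DirTree V) (lam : V → ℝ)
  (S : lp (fun _ : V => ℂ) 2 →L[ℂ] lp (fun _ : V => ℂ) 2)

lemma cfun_sib
    (hbal : ∀ n : ℕ, 1 ≤ n → ∀ u v : V, u ≠ T.root → v ≠ T.root → T.par u = T.par v →
      ‖(S ^ n) (lp.single 2 u (1:ℂ))‖ = ‖(S ^ n) (lp.single 2 v (1:ℂ))‖)
    (m : ℕ) (u v : V) (hu : u ≠ T.root) (hv : v ≠ T.root) (hp : T.par u = T.par v) :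
    cfun S m u = cfun S m v := by
  cases m with
  | zero =>
      have h1 : cfun S 0 u = 1 := by
        have : cfun S 0 u = ‖(S ^ 0) (lp.single 2 u (1:ℂ))‖ ^ 2 := rfl
        rw [this, pow_zero]
        simp [norm_single_one]
      have h2 : cfun S 0 v = 1 := by
        have : cfun S 0 v = ‖(S ^ 0) (lp.single 2 v (1:ℂ))‖ ^ 2 := rfl
        rw [this, pow_zero]
        simp [norm_single_one]
      rw [h1, h2]
  | succ m =>
      have h : cfun S (m+1) u = ‖(S ^ (m+1)) (lp.single 2 u (1:ℂ))‖ ^ 2 := rfl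
      rw [h, hbal (m+1) (Nat.succ_le_succ (Nat.zero_le m)) u v hu hv hp]
      rfl

lemma key (hS : IsShift T lam S)
    (hbal : ∀ n : ℕ, 1 ≤ n → ∀ u v : V, u ≠ T.root → v ≠ T.root → T.par u = T.par v →
      ‖(S ^ n) (lp.single 2 u (1:ℂ))‖ = ‖(S ^ n) (lp.single 2 v (1:ℂ))‖)
    (m k : ℕ) (hk : 1 ≤ k) (x f' : lp (fun _ : V => ℂ) 2)
    (hf' : ContinuousLinearMap.adjoint S f' = 0) :
    (inner ℂ ((S ^ (m + k)) x) ((S ^ m) f') : ℂ) = 0 := by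
  obtain ⟨j, rfl⟩ : ∃ j, k = j + 1 := ⟨k - 1, (Nat.succ_pred_eq_of_pos hk).symm⟩
  have hcmdef : ∀ w : V, ∃ c : ℝ, 0 ≤ c ∧ c ≤ ‖S ^ m‖ ^ 2 ∧
      ∀ u : V, u ≠ T.root → T.par u = w → c = cfun S m u := by
    intro w
    by_cases h : ∃ u : V, u ≠ T.root ∧ T.par u = w
    · obtain ⟨u0, hu0, hpu0⟩ := h
      exact ⟨cfun S m u0, cfun_nonneg S m u0, cfun_le S m u0,
        fun u hu hpu => cfun_sib T S hbal m u0 u hu0 hu (by rw [hpu0, hpu])⟩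
    · exact ⟨0, le_refl 0, by positivity, fun u hu hpu => absurd ⟨u, hu, hpu⟩ h⟩
  choose cm hcm0 hcmle hcmeq using hcmdef
  set x' : lp (fun _ : V => ℂ) 2 := (S ^ j) x with hx'
  have hzmem : Memℓp (fun w : V => ((cm w : ℝ) : ℂ) * x' w) 2 := by
    apply memℓp_gen
    have hx2 : Summable fun w : V => ‖x' w‖ ^ (2:ℝ≥0∞).toReal :=
      (lp.memℓp x').summable (by norm_num)
    refine Summable.of_nonneg_of_le (fun w => ?_) (fun w => ?_)
      (hx2.mul_left ((‖S ^ m‖ ^ 2) ^ (2:ℝ≥0∞).toReal))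
    · positivity
    · have hb : ‖((cm w : ℝ) : ℂ) * x' w‖ ≤ ‖S ^ m‖ ^ 2 * ‖x' w‖ := by
        rw [norm_mul, Complex.norm_real, Real.norm_eq_abs, abs_of_nonneg (hcm0 w)]
        exact mul_le_mul_of_nonneg_right (hcmle w) (norm_nonneg _)
      calc ‖((cm w : ℝ) : ℂ) * x' w‖ ^ (2:ℝ≥0∞).toReal
          ≤ (‖S ^ m‖ ^ 2 * ‖x' w‖) ^ (2:ℝ≥0∞).toReal :=
            Real.rpow_le_rpow (norm_nonneg _) hb (by norm_num)
        _ = (‖S ^ m‖ ^ 2) ^ (2:ℝ≥0∞).toReal * ‖x' w‖ ^ (2:ℝ≥0∞).toReal :=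
            Real.mul_rpow (by positivity) (norm_nonneg _)
  set z : lp (fun _ : V => ℂ) 2 := ⟨fun w : V => ((cm w : ℝ) : ℂ) * x' w, hzmem⟩ with hzdef
  have hzc : ∀ w : V, z w = ((cm w : ℝ) : ℂ) * x' w := fun w => rfl
  have hSz : ∀ u : V, (S z) u = ((cfun S m u : ℝ) : ℂ) * ((S ^ (j+1)) x) u := by
    intro u
    rw [pow_shift_succ S j x, hS z u, hS ((S ^ j) x) u]
    by_cases hu : u = T.root
    · simp [hu]
    · simp only [if_neg hu]
      rw [hzc (T.par u), hcmeq (T.par u) u hu rfl, hx']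
      push_cast
      ring
  have h1 : (inner ℂ ((S ^ (m + (j+1))) x) ((S ^ m) f') : ℂ)
      = ∑' u : V, ((cfun S m u : ℝ) : ℂ) * (conj (((S ^ (j+1)) x) u) * f' u) := by
    have e : (S ^ (m + (j+1))) x = (S ^ m) ((S ^ (j+1)) x) := by
      rw [pow_add, ContinuousLinearMap.mul_apply]
    rw [e]
    exact L1 T lam S hS m _ f'
  have h2 : ∀ u : V, ((cfun S m u : ℝ) : ℂ) * (conj (((S ^ (j+1)) x) u) * f' u)
      = conj ((S z) u) * f' u := by
    intro u
    rw [hSz u, map_mul, Complex.conj_ofReal]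
    ring
  have h3 : (inner ℂ (S z) f' : ℂ) = ∑' u : V, conj ((S z) u) * f' u := by
    rw [lp.inner_eq_tsum]
    exact tsum_congr fun u => RCLike.inner_apply' _ _
  rw [h1, tsum_congr h2, ← h3, ← ContinuousLinearMap.adjoint_inner_right, hf',
    inner_zero_right]

end Main2


/-- Theorem (iii): if `S_λ` is locally power balanced, then the subspaces
`S_λⁿ(ker S_λ*)` and `S_λᵐ(ker S_λ*)` are mutually orthogonal for all `n ≠ m`. -/
theorem stmt18 [Countable V] [Infinite V] (T : DirTree V) (lam : V → ℝ)
    (hlam : ∀ v, v ≠ T.root → 0 < lam v)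
    (S : lp (fun _ : V => ℂ) 2 →L[ℂ] lp (fun _ : V => ℂ) 2) (hS : IsShift T lam S)
    (hbal : ∀ n : ℕ, 1 ≤ n → ∀ u v : V, u ≠ T.root → v ≠ T.root → T.par u = T.par v →
      ‖(S ^ n) (lp.single 2 u (1:ℂ))‖ = ‖(S ^ n) (lp.single 2 v (1:ℂ))‖) :
    ∀ n m : ℕ, n ≠ m →
      ∀ g ∈ Submodule.map (S ^ n).toLinearMap (LinearMap.ker (ContinuousLinearMap.adjoint S).toLinearMap),
        ∀ h ∈ Submodule.map (S ^ m).toLinearMap (LinearMap.ker (ContinuousLinearMap.adjoint S).toLinearMap),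
          (inner ℂ g h : ℂ) = 0 := by
  intro n m hnm g hg h hh
  obtain ⟨f, hf, rfl⟩ := Submodule.mem_map.mp hg
  obtain ⟨f', hf', rfl⟩ := Submodule.mem_map.mp hh
  rw [LinearMap.mem_ker] at hf hf'
  simp only [ContinuousLinearMap.coe_coe] at hf hf' ⊢
  rcases lt_or_gt_of_ne hnm with hlt | hgt
  · rw [← inner_conj_symm]
    have hm : m = n + (m - n) := by omega
    rw [hm, key T lam S hS hbal n (m - n) (by omega) f' f hf, map_zero]
  · have hn : n = m + (n - m) := by omega
    rw [hn]
    exact key T lam S hS hbal m (n - m) (by omega) f f' hf'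
end
end

section
/- If S_λ is injective and the subspaces S_λⁿ(ker S_λ*) and S_λᵐ(ker S_λ*) are mutually orthogonal for all n, m ∈ ℕ₀ with n ≠ m, then S_λ is balanced, i.e., ‖S_λ e_u‖ = ‖S_λ e_v‖ for all u, v ∈ V with |u| = |v|. -/
open Filter Finset Classical

set_option linter.unusedVariables false
open scoped ComplexConjugate ENNReal

noncomputable section
attribute [local instance] Classical.propDecidable

variable {V : Type*}

namespace Stmt19Aux

lemma depth_iter (T : DirTree V) : ∀ k, ∀ x, k ≤ T.depth x →
    T.depth (T.par^[k] x) + k = T.depth x := by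
  intro k
  induction k with
  | zero => intro x _; simp
  | succ k ih =>
    intro x hk
    have hk' : k ≤ T.depth x := Nat.le_of_succ_le hk
    have h1 := ih x hk'
    have hne : T.par^[k] x ≠ T.root := by
      intro h
      rw [h, (T.depth_eq_zero T.root).mpr rfl] at h1
      omega
    have h2 := T.depth_par _ hne
    rw [Function.iterate_succ_apply']
    omega

lemma iter_root (T : DirTree V) (x : V) : T.par^[T.depth x] x = T.root := by
  have := depth_iter T (T.depth x) x le_rfl
  exact (T.depth_eq_zero _).mp (by omega)

lemma iter_ne_root (T : DirTree V) {k : ℕ} {x : V} (h : k < T.depth x) :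
    T.par^[k] x ≠ T.root := by
  have := depth_iter T k x (le_of_lt h)
  intro he
  rw [he, (T.depth_eq_zero T.root).mpr rfl] at this
  omega

lemma pow_apply (T : DirTree V) (lam : V → ℝ)
    (S : lp (fun _ : V => ℂ) 2 →L[ℂ] lp (fun _ : V => ℂ) 2) (hS : IsShift T lam S) :
    ∀ (m : ℕ) (f : lp (fun _ : V => ℂ) 2) (x : V),
      ((S ^ m) f) x = if m ≤ T.depth x then
        wProd T (fun u => (lam u : ℂ)) x m * f (T.par^[m] x) else 0 := by
  intro m
  induction m with
  | zero =>
    intro f x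
    simp [wProd]
  | succ m ih =>
    intro f x
    have h1 : ((S ^ (m+1)) f) x = ((S ^ m) (S f)) x := by
      rw [pow_succ, ContinuousLinearMap.mul_apply]
    rw [h1, ih (S f) x]
    by_cases h : m + 1 ≤ T.depth x
    · have hm : m ≤ T.depth x := by omega
      rw [if_pos hm, if_pos h, hS f (T.par^[m] x)]
      have hne : T.par^[m] x ≠ T.root := iter_ne_root T (by omega)
      rw [if_neg hne]
      rw [wProd, wProd, Finset.prod_range_succ, Function.iterate_succ_apply']
      ring
    · rw [if_neg h]
      by_cases hm : m ≤ T.depth x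
      · have hmd : m = T.depth x := by omega
        rw [if_pos hm, hS f (T.par^[m] x)]
        rw [hmd, iter_root T x, if_pos rfl, mul_zero]
      · rw [if_neg hm]

lemma wProd_real (T : DirTree V) (lam : V → ℝ) (x : V) (k : ℕ) :
    wProd T (fun u => (lam u : ℂ)) x k
      = ((∏ n ∈ Finset.range k, lam (T.par^[n] x) : ℝ) : ℂ) := by
  rw [wProd]; push_cast; rfl

lemma wProd_pos (T : DirTree V) (lam : V → ℝ) (hlam : ∀ v, v ≠ T.root → 0 < lam v)
    (x : V) (k : ℕ) (hk : k ≤ T.depth x) :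
    0 < ∏ n ∈ Finset.range k, lam (T.par^[n] x) := by
  apply Finset.prod_pos
  intro n hn
  rw [Finset.mem_range] at hn
  exact hlam _ (iter_ne_root T (by omega))

lemma key1 (T : DirTree V) (lam : V → ℝ)
    (S : lp (fun _ : V => ℂ) 2 →L[ℂ] lp (fun _ : V => ℂ) 2) (hS : IsShift T lam S)
    (m : ℕ) (x : V) (f : lp (fun _ : V => ℂ) 2) :
    (inner ℂ ((S ^ m) (lp.single 2 x (1:ℂ))) ((S ^ m) f) : ℂ)
      = f x * (‖(S ^ m) (lp.single 2 x (1:ℂ))‖ : ℂ) ^ 2 := by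
  set a := (S ^ m) (lp.single 2 x (1:ℂ)) with ha_def
  have hpt : ∀ y, (inner ℂ (a y) (((S ^ m) f) y) : ℂ) = f x * (inner ℂ (a y) (a y) : ℂ) := by
    intro y
    rw [RCLike.inner_apply, RCLike.inner_apply]
    have ha := pow_apply T lam S hS m (lp.single 2 x 1) y
    have hb := pow_apply T lam S hS m f y
    rw [← ha_def] at ha
    by_cases h : m ≤ T.depth y
    · rw [if_pos h] at ha hb
      by_cases hx : T.par^[m] y = x
      · rw [hx, lp.single_apply_self, mul_one] at ha
        rw [ha, hb, hx]; ring
      · rw [lp.single_apply_ne 2 x 1 hx, mul_zero] at ha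
        rw [ha]; simp
    · rw [if_neg h] at ha hb
      rw [ha, hb]; simp
  calc (inner ℂ a ((S ^ m) f) : ℂ) = ∑' y, (inner ℂ (a y) (((S ^ m) f) y) : ℂ) :=
        lp.inner_eq_tsum _ _
    _ = ∑' y, f x * (inner ℂ (a y) (a y) : ℂ) := tsum_congr hpt
    _ = f x * ∑' y, (inner ℂ (a y) (a y) : ℂ) := tsum_mul_left
    _ = f x * (inner ℂ a a : ℂ) := by rw [← lp.inner_eq_tsum]
    _ = _ := by rw [inner_self_eq_norm_sq_to_K]; norm_num

lemma mem_ker_of_inner (S : lp (fun _ : V => ℂ) 2 →L[ℂ] lp (fun _ : V => ℂ) 2)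
    (g : lp (fun _ : V => ℂ) 2) (h : ∀ f, (inner ℂ g (S f) : ℂ) = 0) :
    ContinuousLinearMap.adjoint S g = 0 := by
  rw [← inner_self_eq_zero (𝕜 := ℂ), ContinuousLinearMap.adjoint_inner_left]
  exact h _

lemma prod_split (T : DirTree V) (lam : V → ℝ) (x : V) (k : ℕ) :
    ∏ n ∈ Finset.range (k + 1), lam (T.par^[n] x)
      = (∏ n ∈ Finset.range k, lam (T.par^[n] (T.par x))) * lam x := by
  rw [Finset.prod_range_succ']
  simp [Function.iterate_succ_apply]

lemma sibling_norm (T : DirTree V) (lam : V → ℝ)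
    (hlam : ∀ v, v ≠ T.root → 0 < lam v)
    (S : lp (fun _ : V => ℂ) 2 →L[ℂ] lp (fun _ : V => ℂ) 2) (hS : IsShift T lam S)
    (horth : ∀ n m : ℕ, n ≠ m →
      ∀ g ∈ Submodule.map ((S ^ n : _ →L[ℂ] _) : lp (fun _ : V => ℂ) 2 →ₗ[ℂ] lp (fun _ : V => ℂ) 2) (LinearMap.ker (ContinuousLinearMap.adjoint S : lp (fun _ : V => ℂ) 2 →ₗ[ℂ] lp (fun _ : V => ℂ) 2)),
        ∀ h ∈ Submodule.map ((S ^ m : _ →L[ℂ] _) : lp (fun _ : V => ℂ) 2 →ₗ[ℂ] lp (fun _ : V => ℂ) 2) (LinearMap.ker (ContinuousLinearMap.adjoint S : lp (fun _ : V => ℂ) 2 →ₗ[ℂ] lp (fun _ : V => ℂ) 2)),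
          (inner ℂ g h : ℂ) = 0)
    (u v : V) (hu : u ≠ T.root) (hv : v ≠ T.root) (hpar : T.par u = T.par v) (m : ℕ) :
    ‖(S ^ m) (lp.single 2 u (1:ℂ))‖ = ‖(S ^ m) (lp.single 2 v (1:ℂ))‖ := by
  set p := T.par u with hp
  have hdu : T.depth p + 1 = T.depth u := T.depth_par u hu
  have hdv : T.depth p + 1 = T.depth v := by rw [hpar]; exact T.depth_par v hv
  set d := T.depth u with hd
  set g : lp (fun _ : V => ℂ) 2 :=
    (lam v : ℂ) • lp.single 2 u 1 - (lam u : ℂ) • lp.single 2 v 1 with hg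
  have hker : ContinuousLinearMap.adjoint S g = 0 := by
    apply mem_ker_of_inner
    intro f
    rw [hg, inner_sub_left, inner_smul_left, inner_smul_left,
      lp.inner_single_left, lp.inner_single_left, RCLike.inner_apply, RCLike.inner_apply,
      hS f u, hS f v, if_neg hu, if_neg hv, ← hp, ← hpar, Complex.conj_ofReal,
      Complex.conj_ofReal]
    ring
  have heroot : ContinuousLinearMap.adjoint S (lp.single 2 T.root (1:ℂ)) = 0 := by
    apply mem_ker_of_inner
    intro f
    rw [lp.inner_single_left, RCLike.inner_apply, hS f T.root, if_pos rfl, zero_mul]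
  have h0 : (inner ℂ ((S ^ m) g) ((S ^ (m + d)) (lp.single 2 T.root (1:ℂ))) : ℂ) = 0 := by
    refine horth m (m + d) (by omega) _ ?_ _ ?_
    · exact Submodule.mem_map_of_mem (LinearMap.mem_ker.mpr hker)
    · exact Submodule.mem_map_of_mem (LinearMap.mem_ker.mpr heroot)
  have hrw : (S ^ (m + d)) (lp.single 2 T.root (1:ℂ))
      = (S ^ m) ((S ^ d) (lp.single 2 T.root (1:ℂ))) := by
    rw [pow_add, ContinuousLinearMap.mul_apply]
  rw [hrw, hg, map_sub, map_smul, map_smul, inner_sub_left, inner_smul_left,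
    inner_smul_left, key1 T lam S hS, key1 T lam S hS] at h0
  have hvalu : ((S ^ d) (lp.single 2 T.root (1:ℂ))) u = wProd T (fun w => (lam w : ℂ)) u d := by
    rw [pow_apply T lam S hS d _ u, if_pos (le_of_eq hd)]
    have : T.par^[d] u = T.root := by rw [hd]; exact iter_root T u
    rw [this, lp.single_apply_self, mul_one]
  have hvalv : ((S ^ d) (lp.single 2 T.root (1:ℂ))) v = wProd T (fun w => (lam w : ℂ)) v d := by
    rw [pow_apply T lam S hS d _ v, if_pos (by omega)]
    have : T.par^[d] v = T.root := by
      have : d = T.depth v := by omega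
      rw [this]; exact iter_root T v
    rw [this, lp.single_apply_self, mul_one]
  set a := ‖(S ^ m) (lp.single 2 u (1:ℂ))‖ with ha
  set b := ‖(S ^ m) (lp.single 2 v (1:ℂ))‖ with hb
  rw [hvalu, hvalv, wProd_real, wProd_real, Complex.conj_ofReal, Complex.conj_ofReal] at h0
  set Pu := ∏ n ∈ Finset.range d, lam (T.par^[n] u) with hPu
  set Pv := ∏ n ∈ Finset.range d, lam (T.par^[n] v) with hPv
  have hre : lam v * Pu * a ^ 2 - lam u * Pv * b ^ 2 = 0 := by
    have hc : ((lam v * Pu * a ^ 2 - lam u * Pv * b ^ 2 : ℝ) : ℂ) = 0 := by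
      push_cast
      linear_combination h0
    exact_mod_cast hc
  set dp := T.depth p with hdp
  set Pr := ∏ n ∈ Finset.range dp, lam (T.par^[n] p) with hPr
  have hsplitu : Pu = Pr * lam u := by
    rw [hPu, hPr, show d = dp + 1 by omega, prod_split, hp]
  have hsplitv : Pv = Pr * lam v := by
    rw [hPv, hPr, show d = dp + 1 by omega, prod_split, ← hpar]
  have hPrpos : 0 < Pr := wProd_pos T lam hlam p dp (le_of_eq rfl)
  have hlu := hlam u hu
  have hlv := hlam v hv
  rw [hsplitu, hsplitv] at hre
  have hsq : a ^ 2 = b ^ 2 := by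
    have hc : 0 < lam v * Pr * lam u := by positivity
    apply mul_left_cancel₀ (ne_of_gt hc)
    linear_combination hre
  have h1 : (a - b) * (a + b) = 0 := by linear_combination hsq
  rcases mul_eq_zero.mp h1 with h | h
  · linarith
  · have ha' : 0 ≤ a := norm_nonneg _
    have hb' : 0 ≤ b := norm_nonneg _
    linarith

lemma step (T : DirTree V) (lam : V → ℝ)
    (S : lp (fun _ : V => ℂ) 2 →L[ℂ] lp (fun _ : V => ℂ) 2) (hS : IsShift T lam S)
    (p : V) (m : ℕ) (γ : ℝ)
    (hγ : ∀ c, c ≠ T.root → T.par c = p → ‖(S ^ m) (lp.single 2 c (1:ℂ))‖ = γ) :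
    ‖(S ^ (m + 1)) (lp.single 2 p (1:ℂ))‖ ^ 2 = γ ^ 2 * ‖S (lp.single 2 p (1:ℂ))‖ ^ 2 := by
  set g := S (lp.single 2 p (1:ℂ)) with hgdef
  set A := S ^ m with hA
  set B := ContinuousLinearMap.adjoint A (A g) with hB
  have hBx : ∀ x, B x = g x * (‖A (lp.single 2 x (1:ℂ))‖ : ℂ) ^ 2 := by
    intro x
    have h1 : (inner ℂ (lp.single 2 x (1:ℂ)) B : ℂ) = B x := by
      rw [lp.inner_single_left, RCLike.inner_apply, map_one, mul_one]
    rw [← h1, hB, ContinuousLinearMap.adjoint_inner_right, hA, key1 T lam S hS]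
  have hpt : ∀ x, (inner ℂ (g x) (B x) : ℂ) = (γ:ℂ) ^ 2 * (inner ℂ (g x) (g x) : ℂ) := by
    intro x
    rw [RCLike.inner_apply, RCLike.inner_apply, hBx x]
    by_cases hx : g x = 0
    · rw [hx]; simp
    · have hgx := hS (lp.single 2 p 1) x
      rw [← hgdef] at hgx
      have hxroot : x ≠ T.root := by
        intro h; rw [if_pos h] at hgx; exact hx hgx
      rw [if_neg hxroot] at hgx
      have hparx : T.par x = p := by
        by_contra h
        rw [lp.single_apply_ne 2 p 1 h, mul_zero] at hgx
        exact hx hgx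
      rw [hγ x hxroot hparx]
      ring
  have hip : (inner ℂ g B : ℂ) = (γ:ℂ) ^ 2 * (inner ℂ g g : ℂ) := by
    calc (inner ℂ g B : ℂ) = ∑' x, (inner ℂ (g x) (B x) : ℂ) := lp.inner_eq_tsum _ _
      _ = ∑' x, (γ:ℂ) ^ 2 * (inner ℂ (g x) (g x) : ℂ) := tsum_congr hpt
      _ = (γ:ℂ) ^ 2 * ∑' x, (inner ℂ (g x) (g x) : ℂ) := tsum_mul_left
      _ = (γ:ℂ) ^ 2 * (inner ℂ g g : ℂ) := by rw [← lp.inner_eq_tsum]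
  have h2 : (inner ℂ (A g) (A g) : ℂ) = (inner ℂ g B : ℂ) := by
    rw [hB, ContinuousLinearMap.adjoint_inner_right]
  have h3 : A g = (S ^ (m + 1)) (lp.single 2 p (1:ℂ)) := by
    rw [hA, pow_succ, ContinuousLinearMap.mul_apply, hgdef]
  have h5 : (inner ℂ ((S ^ (m + 1)) (lp.single 2 p (1:ℂ)))
        ((S ^ (m + 1)) (lp.single 2 p (1:ℂ))) : ℂ) = (γ:ℂ) ^ 2 * (inner ℂ g g : ℂ) := by
    rw [← h3, h2, hip]
  have hsn : ∀ x : lp (fun _ : V => ℂ) 2, (inner ℂ x x : ℂ) = ((‖x‖ ^ 2 : ℝ) : ℂ) := by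
    intro x; rw [inner_self_eq_norm_sq_to_K]; norm_num
  rw [hsn, hsn] at h5
  exact_mod_cast h5

lemma main (T : DirTree V) (lam : V → ℝ)
    (hlam : ∀ v, v ≠ T.root → 0 < lam v)
    (S : lp (fun _ : V => ℂ) 2 →L[ℂ] lp (fun _ : V => ℂ) 2) (hS : IsShift T lam S)
    (hinj : Function.Injective S)
    (horth : ∀ n m : ℕ, n ≠ m →
      ∀ g ∈ Submodule.map ((S ^ n : _ →L[ℂ] _) : lp (fun _ : V => ℂ) 2 →ₗ[ℂ] lp (fun _ : V => ℂ) 2) (LinearMap.ker (ContinuousLinearMap.adjoint S : lp (fun _ : V => ℂ) 2 →ₗ[ℂ] lp (fun _ : V => ℂ) 2)),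
        ∀ h ∈ Submodule.map ((S ^ m : _ →L[ℂ] _) : lp (fun _ : V => ℂ) 2 →ₗ[ℂ] lp (fun _ : V => ℂ) 2) (LinearMap.ker (ContinuousLinearMap.adjoint S : lp (fun _ : V => ℂ) 2 →ₗ[ℂ] lp (fun _ : V => ℂ) 2)),
          (inner ℂ g h : ℂ) = 0) :
    ∀ d : ℕ, ∀ u v : V, T.depth u = d → T.depth v = d → ∀ m : ℕ,
      ‖(S ^ m) (lp.single 2 u (1:ℂ))‖ = ‖(S ^ m) (lp.single 2 v (1:ℂ))‖ := by
  intro d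
  induction d with
  | zero =>
    intro u v hu hv m
    have hu' : u = T.root := (T.depth_eq_zero u).mp hu
    have hv' : v = T.root := (T.depth_eq_zero v).mp hv
    rw [hu', hv']
  | succ d ih =>
    intro u v hu hv m
    have hur : u ≠ T.root := by
      intro h
      rw [(T.depth_eq_zero u).mpr h] at hu
      omega
    have hvr : v ≠ T.root := by
      intro h
      rw [(T.depth_eq_zero v).mpr h] at hv
      omega
    have hdp : T.depth (T.par u) = d := by have := T.depth_par u hur; omega
    have hdq : T.depth (T.par v) = d := by have := T.depth_par v hvr; omega
    have hsp : ∀ c, c ≠ T.root → T.par c = T.par u →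
        ‖(S ^ m) (lp.single 2 c (1:ℂ))‖ = ‖(S ^ m) (lp.single 2 u (1:ℂ))‖ :=
      fun c hc hcp => sibling_norm T lam hlam S hS horth c u hc hur hcp m
    have hsq : ∀ c, c ≠ T.root → T.par c = T.par v →
        ‖(S ^ m) (lp.single 2 c (1:ℂ))‖ = ‖(S ^ m) (lp.single 2 v (1:ℂ))‖ :=
      fun c hc hcp => sibling_norm T lam hlam S hS horth c v hc hvr hcp m
    have h1 := step T lam S hS (T.par u) m _ hsp
    have h2 := step T lam S hS (T.par v) m _ hsq
    have h3 : ‖(S ^ (m + 1)) (lp.single 2 (T.par u) (1:ℂ))‖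
        = ‖(S ^ (m + 1)) (lp.single 2 (T.par v) (1:ℂ))‖ := ih (T.par u) (T.par v) hdp hdq (m + 1)
    have h4 : ‖S (lp.single 2 (T.par u) (1:ℂ))‖ = ‖S (lp.single 2 (T.par v) (1:ℂ))‖ := by
      have := ih (T.par u) (T.par v) hdp hdq 1
      rwa [pow_one] at this
    have hne : lp.single (E := fun _ : V => ℂ) 2 (T.par u) (1:ℂ) ≠ 0 := by
      intro h0
      have hval := lp.single_apply_self (E := fun _ : V => ℂ) 2 (T.par u) (1:ℂ)
      rw [h0] at hval
      simpa using hval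
    have hSne : S (lp.single 2 (T.par u) (1:ℂ)) ≠ 0 :=
      fun h => hne (hinj (by rw [h, map_zero]))
    have hpos : 0 < ‖S (lp.single 2 (T.par u) (1:ℂ))‖ := norm_pos_iff.mpr hSne
    set a := ‖(S ^ m) (lp.single 2 u (1:ℂ))‖ with ha
    set b := ‖(S ^ m) (lp.single 2 v (1:ℂ))‖ with hb
    set c := ‖S (lp.single 2 (T.par u) (1:ℂ))‖ with hc
    rw [← h4, ← h3] at h2
    have hsq2 : a ^ 2 * c ^ 2 = b ^ 2 * c ^ 2 := by
      rw [← h1, ← h2]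
    have hsq3 : a ^ 2 = b ^ 2 :=
      mul_right_cancel₀ (by positivity) hsq2
    have h6 : (a - b) * (a + b) = 0 := by linear_combination hsq3
    have ha' : 0 ≤ a := norm_nonneg _
    have hb' : 0 ≤ b := norm_nonneg _
    rcases mul_eq_zero.mp h6 with h | h
    · linarith
    · linarith

end Stmt19Aux

/-- Theorem (iv): if `S_λ` is injective and the subspaces
`S_λⁿ(ker S_λ*)`, `n ∈ ℕ₀`, are mutually orthogonal, then `S_λ` is balanced. -/
theorem stmt19 [Countable V] [Infinite V] (T : DirTree V) (lam : V → ℝ)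
    (hlam : ∀ v, v ≠ T.root → 0 < lam v)
    (S : lp (fun _ : V => ℂ) 2 →L[ℂ] lp (fun _ : V => ℂ) 2) (hS : IsShift T lam S)
    (hinj : Function.Injective S)
    (horth : ∀ n m : ℕ, n ≠ m →
      ∀ g ∈ Submodule.map ((S ^ n : _ →L[ℂ] _) : lp (fun _ : V => ℂ) 2 →ₗ[ℂ] lp (fun _ : V => ℂ) 2) (LinearMap.ker (ContinuousLinearMap.adjoint S : lp (fun _ : V => ℂ) 2 →ₗ[ℂ] lp (fun _ : V => ℂ) 2)),
        ∀ h ∈ Submodule.map ((S ^ m : _ →L[ℂ] _) : lp (fun _ : V => ℂ) 2 →ₗ[ℂ] lp (fun _ : V => ℂ) 2) (LinearMap.ker (ContinuousLinearMap.adjoint S : lp (fun _ : V => ℂ) 2 →ₗ[ℂ] lp (fun _ : V => ℂ) 2)),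
          (inner ℂ g h : ℂ) = 0) :
    ∀ u v : V, T.depth u = T.depth v →
      ‖S (lp.single 2 u (1:ℂ))‖ = ‖S (lp.single 2 v (1:ℂ))‖ := by
  intro u v h
  have := Stmt19Aux.main T lam hlam S hS hinj horth (T.depth u) u v rfl h.symm 1
  rwa [pow_one] at this
end
end
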